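/- arXiv:1405.6574 — 2 statements merged into one kernel-verified Lean document; each statement's English description precedes it below -/
import Mathlib

section
/- Let n ≥ 3 be an odd integer. The linear map T : V → S ⊗ S determined by T(u_i) = ẽ_i and T(u_{n+i}) = ẽ_{n+i} for 1 ≤ i ≤ n intertwines the Chevalley generators: T ∘ X_k^V = (X_k ⊗ id_S + id_S ⊗ X_k) ∘ T and T ∘ Y_k^V = (Y_k ⊗ id_S + id_S ⊗ Y_k) ∘ T for every k ∈ {1,…,n}. (This realizes the embedding of the vector representation V of so(2n,ℂ) into U₊ ⊗ U₊.) -/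
open scoped TensorProduct Classical

noncomputable section

/-- Subsets of `{1,…,n}`, the index set for the basis of the spinor space `S`. -/
abbrev SIdx (n : ℕ) : Type := {X : Finset ℕ // X ∈ (Finset.Icc 1 n).powerset}

/-- The spinor space `S`, with basis `(e_X)` indexed by subsets of `{1,…,n}`. -/
abbrev Sp (n : ℕ) : Type := SIdx n → ℂ

/-- The basis vector `e_X`. -/
def eB (n : ℕ) (X : SIdx n) : Sp n := Pi.single X 1

/-- `I₁(X) = Σ_{k∈X} k − |X|·n`. -/
def I1 (n : ℕ) (X : Finset ℕ) : ℤ := (∑ k ∈ X, (k : ℤ)) - X.card * n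

/-- `I_i(X) = I₁(X) + |{k ∈ X : k < i}| − (i−1)`. -/
def Ilow (n i : ℕ) (X : Finset ℕ) : ℤ :=
  I1 n X + ((X.filter (fun k => k < i)).card : ℤ) - ((i : ℤ) - 1)

/-- `I_{n+i}(X) = I₁(X) + |{k ∈ X : k < i}| − (n−1)`. -/
def Ihigh (n i : ℕ) (X : Finset ℕ) : ℤ :=
  I1 n X + ((X.filter (fun k => k < i)).card : ℤ) - ((n : ℤ) - 1)

def eraseIdx (n : ℕ) (X : SIdx n) (i : ℕ) : SIdx n :=
  ⟨(X : Finset ℕ).erase i,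
    Finset.mem_powerset.2 ((Finset.erase_subset _ _).trans (Finset.mem_powerset.1 X.2))⟩

def insertIdx (n : ℕ) (X : SIdx n) (i : ℕ) (h : i ∈ Finset.Icc 1 n) : SIdx n :=
  ⟨insert i (X : Finset ℕ),
    Finset.mem_powerset.2 (Finset.insert_subset h (Finset.mem_powerset.1 X.2))⟩

/-- The creation operator `a_i†`: `a_i† e_X = (−1)^{|{k ∈ X : k < i}|} e_{X∪{i}}` if `i ∉ X`,
and `a_i† e_X = 0` otherwise. -/
def adag (n i : ℕ) : Sp n →ₗ[ℂ] Sp n where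
  toFun f := fun X =>
    if i ∈ (X : Finset ℕ) then
      ((-1 : ℂ) ^ ((((X : Finset ℕ).erase i).filter (fun k => k < i)).card)) *
        f (eraseIdx n X i)
    else 0
  map_add' f g := by
    funext X; by_cases h : i ∈ (X : Finset ℕ) <;> simp [h] <;> ring
  map_smul' a f := by
    funext X; by_cases h : i ∈ (X : Finset ℕ) <;> simp [h] <;> ring

/-- The annihilation operator `a_i`: `a_i e_X = (−1)^{|{k ∈ X : k < i}|} e_{X∖{i}}` if `i ∈ X`,
and `a_i e_X = 0` otherwise. -/
def aop (n i : ℕ) : Sp n →ₗ[ℂ] Sp n where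
  toFun f := fun X =>
    if h : i ∈ Finset.Icc 1 n ∧ i ∉ (X : Finset ℕ) then
      ((-1 : ℂ) ^ (((insert i (X : Finset ℕ)).filter (fun k => k < i)).card)) *
        f (insertIdx n X i h.1)
    else 0
  map_add' f g := by
    funext X
    by_cases h : i ∈ Finset.Icc 1 n ∧ i ∉ (X : Finset ℕ)
    · simp only [dif_pos h, Pi.add_apply, mul_add]
    · simp only [dif_neg h, Pi.add_apply, add_zero]
  map_smul' a f := by
    funext X
    by_cases h : i ∈ Finset.Icc 1 n ∧ i ∉ (X : Finset ℕ)
    · simp only [dif_pos h, Pi.smul_apply, smul_eq_mul, RingHom.id_apply]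
      ring
    · simp only [dif_neg h, Pi.smul_apply, smul_eq_mul, RingHom.id_apply, mul_zero]

/-- The raising Chevalley generator: `X_i = −a_{i+1} a_i†` for `1 ≤ i ≤ n−1` and
`X_n = a_n† a_{n−1}†`. -/
def Xop (n i : ℕ) : Sp n →ₗ[ℂ] Sp n :=
  if i = n then (adag n n).comp (adag n (n - 1))
  else -((aop n (i + 1)).comp (adag n i))

/-- The lowering Chevalley generator: `Y_i = −a_i a_{i+1}†` for `1 ≤ i ≤ n−1` and
`Y_n = a_n a_{n−1}`. -/
def Yop (n i : ℕ) : Sp n →ₗ[ℂ] Sp n :=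
  if i = n then (aop n n).comp (aop n (n - 1))
  else -((aop n i).comp (adag n (i + 1)))

/-- `ẽ_i = Σ_{(X′,X″)∈Ω_i} σ_i(X′) e_{X′} ⊗ e_{X″}`, where `Ω_i` consists of pairs with
`X′ ∪ X″ = {1,…,n}`, `X′ ∩ X″ = {i}`, `|X′|` odd, and `σ_i(X) = (−1)^{I_i(X)}`. -/
def eTlow (n i : ℕ) : Sp n ⊗[ℂ] Sp n :=
  ∑ p ∈ Finset.univ.filter (fun p : SIdx n × SIdx n =>
      (p.1 : Finset ℕ) ∪ (p.2 : Finset ℕ) = Finset.Icc 1 n ∧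
      (p.1 : Finset ℕ) ∩ (p.2 : Finset ℕ) = {i} ∧ Odd (p.1 : Finset ℕ).card),
    ((-1 : ℂ) ^ (Ilow n i (p.1 : Finset ℕ))) • (eB n p.1 ⊗ₜ[ℂ] eB n p.2)

/-- `ẽ_{n+i} = (−1)^i Σ_{(X′,X″)∈Ω_{n+i}} σ_{n+i}(X′) e_{X′} ⊗ e_{X″}`, where `Ω_{n+i}`
consists of pairs of disjoint sets with `X′ ∪ X″ = {1,…,n} ∖ {i}` and `|X′|` odd, and
`σ_{n+i}(X) = (−1)^{I_{n+i}(X)}`. -/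
def eThigh (n i : ℕ) : Sp n ⊗[ℂ] Sp n :=
  ((-1 : ℂ) ^ i) •
    ∑ p ∈ Finset.univ.filter (fun p : SIdx n × SIdx n =>
        (p.1 : Finset ℕ) ∪ (p.2 : Finset ℕ) = (Finset.Icc 1 n) \ {i} ∧
        Disjoint (p.1 : Finset ℕ) (p.2 : Finset ℕ) ∧ Odd (p.1 : Finset ℕ).card),
      ((-1 : ℂ) ^ (Ihigh n i (p.1 : Finset ℕ))) • (eB n p.1 ⊗ₜ[ℂ] eB n p.2)

/-- The vector representation `V = ℂ^{2n}`; the coordinate `x` corresponds to the basis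
vector `u_{x+1}` (1-based indexing). -/
abbrev Vsp (n : ℕ) : Type := Fin (2 * n) → ℂ

/-- The basis vector `u_j` of `V` (1-based). -/
def uB (n j : ℕ) : Vsp n := fun x => if (x : ℕ) + 1 = j then 1 else 0

/-- The `l`-th coordinate functional on `V` (1-based). -/
def coordL (n l : ℕ) : Vsp n →ₗ[ℂ] ℂ where
  toFun f := ∑ x : Fin (2 * n), (if (x : ℕ) + 1 = l then 1 else 0) * f x
  map_add' f g := by simp [mul_add, Finset.sum_add_distrib]
  map_smul' a f := by
    simp only [Pi.smul_apply, smul_eq_mul, RingHom.id_apply, Finset.mul_sum]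
    exact Finset.sum_congr rfl fun x _ => by ring

/-- The matrix unit `E_{kl}`, acting by `E_{kl} u_m = δ_{lm} u_k`. -/
def matUnit (n k l : ℕ) : Vsp n →ₗ[ℂ] Vsp n := (coordL n l).smulRight (uB n k)

/-- The raising generator on `V`: `X_i = E_{i,i+1} − E_{n+i+1,n+i}` for `1 ≤ i ≤ n−1` and
`X_n = E_{n−1,2n} − E_{n,2n−1}`. -/
def XV (n i : ℕ) : Vsp n →ₗ[ℂ] Vsp n :=
  if i = n then matUnit n (n - 1) (2 * n) - matUnit n n (2 * n - 1)
  else matUnit n i (i + 1) - matUnit n (n + i + 1) (n + i)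

/-- The lowering generator on `V`: `Y_i = E_{i+1,i} − E_{n+i,n+i+1}` for `1 ≤ i ≤ n−1` and
`Y_n = E_{2n−1,n} − E_{2n,n−1}`. -/
def YV (n i : ℕ) : Vsp n →ₗ[ℂ] Vsp n :=
  if i = n then matUnit n (2 * n - 1) n - matUnit n (2 * n) (n - 1)
  else matUnit n (i + 1) i - matUnit n (n + i) (n + i + 1)

/-- The linear map `T : V → S ⊗ S` determined by `T(u_i) = ẽ_i` and `T(u_{n+i}) = ẽ_{n+i}`
for `1 ≤ i ≤ n`. -/
def Tmap (n : ℕ) : Vsp n →ₗ[ℂ] Sp n ⊗[ℂ] Sp n :=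
  ∑ i ∈ Finset.Icc 1 n,
    ((coordL n i).smulRight (eTlow n i) + (coordL n (n + i)).smulRight (eThigh n i))

/-! ### Part A: coefficient extraction -/

def Phi (n : ℕ) : (Sp n ⊗[ℂ] Sp n) →ₗ[ℂ] (SIdx n × SIdx n → ℂ) :=
  TensorProduct.lift (LinearMap.mk₂ ℂ (fun f g p => f p.1 * g p.2)
    (fun f f' g => by funext p; simp [add_mul])
    (fun a f g => by funext p; simp [mul_assoc])
    (fun f g g' => by funext p; simp [mul_add])
    (fun a f g => by funext p; simp; ring))

lemma Phi_tmul (n : ℕ) (f g : Sp n) (p : SIdx n × SIdx n) :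
    Phi n (f ⊗ₜ g) p = f p.1 * g p.2 := rfl

lemma sum_eB (n : ℕ) (f : Sp n) : (∑ A : SIdx n, f A • eB n A) = f := by
  funext X
  simp only [Finset.sum_apply, Pi.smul_apply, eB, smul_eq_mul]
  rw [Finset.sum_eq_single X]
  · simp
  · intro A _ hA; simp [Pi.single_apply, hA]
  · intro h; exact absurd (Finset.mem_univ X) h

lemma Phi_injective (n : ℕ) : Function.Injective (Phi n) := by
  have key : ∀ t : Sp n ⊗[ℂ] Sp n,
      (∑ p : SIdx n × SIdx n, Phi n t p • (eB n p.1 ⊗ₜ[ℂ] eB n p.2)) = t := by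
    intro t
    induction t using TensorProduct.induction_on with
    | zero => simp
    | tmul f g =>
      rw [Finset.sum_congr rfl (fun p _ => by rw [Phi_tmul])]
      rw [Fintype.sum_prod_type]
      conv_rhs => rw [← sum_eB n f, ← sum_eB n g]
      rw [TensorProduct.sum_tmul]
      refine Finset.sum_congr rfl fun A _ => ?_
      rw [TensorProduct.tmul_sum]
      refine Finset.sum_congr rfl fun B _ => ?_
      rw [TensorProduct.smul_tmul_smul]
    | add x y hx hy =>
      simp only [map_add, Pi.add_apply, add_smul, Finset.sum_add_distrib, hx, hy]
  intro s t hst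
  rw [← key s, ← key t, hst]

/-! ### Part A2: coefficients of the distinguished vectors -/

def CL (n i : ℕ) (p : SIdx n × SIdx n) : ℂ :=
  if (p.1 : Finset ℕ) ∪ (p.2 : Finset ℕ) = Finset.Icc 1 n ∧
      (p.1 : Finset ℕ) ∩ (p.2 : Finset ℕ) = {i} ∧ Odd (p.1 : Finset ℕ).card then
    (-1 : ℂ) ^ (Ilow n i (p.1 : Finset ℕ))
  else 0

def CH (n i : ℕ) (p : SIdx n × SIdx n) : ℂ :=
  (-1 : ℂ) ^ i *
    (if (p.1 : Finset ℕ) ∪ (p.2 : Finset ℕ) = (Finset.Icc 1 n) \ {i} ∧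
        Disjoint (p.1 : Finset ℕ) (p.2 : Finset ℕ) ∧ Odd (p.1 : Finset ℕ).card then
      (-1 : ℂ) ^ (Ihigh n i (p.1 : Finset ℕ))
    else 0)

lemma Phi_single (n : ℕ) (A B : SIdx n) (p : SIdx n × SIdx n) :
    Phi n (eB n A ⊗ₜ[ℂ] eB n B) p = if p = (A, B) then 1 else 0 := by
  simp only [Phi_tmul, eB, Pi.single_apply, Prod.ext_iff]
  by_cases h1 : p.1 = A <;> by_cases h2 : p.2 = B <;> simp [h1, h2]

lemma Phi_eTlow (n i : ℕ) (p : SIdx n × SIdx n) : Phi n (eTlow n i) p = CL n i p := by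
  unfold eTlow CL
  rw [map_sum, Finset.sum_apply]
  have : ∀ q ∈ Finset.univ.filter (fun q : SIdx n × SIdx n =>
      (q.1 : Finset ℕ) ∪ (q.2 : Finset ℕ) = Finset.Icc 1 n ∧
      (q.1 : Finset ℕ) ∩ (q.2 : Finset ℕ) = {i} ∧ Odd (q.1 : Finset ℕ).card),
      (Phi n ((((-1 : ℂ) ^ (Ilow n i (q.1 : Finset ℕ)))) • (eB n q.1 ⊗ₜ[ℂ] eB n q.2))) p
        = if q = p then (-1 : ℂ) ^ (Ilow n i (q.1 : Finset ℕ)) else 0 := by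
    intro q _
    rw [map_smul, Pi.smul_apply, Phi_single, smul_eq_mul]
    by_cases h : p = (q.1, q.2)
    · simp [h, eq_comm (a := q)]
    · have h' : ¬ q = p := by rintro rfl; exact h rfl
      simp [h, h']
  rw [Finset.sum_congr rfl this, Finset.sum_ite_eq']
  simp only [Finset.mem_filter, Finset.mem_univ, true_and]

lemma Phi_eThigh (n i : ℕ) (p : SIdx n × SIdx n) : Phi n (eThigh n i) p = CH n i p := by
  unfold eThigh CH
  rw [map_smul, Pi.smul_apply, smul_eq_mul]
  congr 1
  rw [map_sum, Finset.sum_apply]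
  have : ∀ q ∈ Finset.univ.filter (fun q : SIdx n × SIdx n =>
      (q.1 : Finset ℕ) ∪ (q.2 : Finset ℕ) = (Finset.Icc 1 n) \ {i} ∧
      Disjoint (q.1 : Finset ℕ) (q.2 : Finset ℕ) ∧ Odd (q.1 : Finset ℕ).card),
      (Phi n ((((-1 : ℂ) ^ (Ihigh n i (q.1 : Finset ℕ)))) • (eB n q.1 ⊗ₜ[ℂ] eB n q.2))) p
        = if q = p then (-1 : ℂ) ^ (Ihigh n i (q.1 : Finset ℕ)) else 0 := by
    intro q _
    rw [map_smul, Pi.smul_apply, Phi_single, smul_eq_mul]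
    by_cases h : p = (q.1, q.2)
    · simp [h, eq_comm (a := q)]
    · have h' : ¬ q = p := by rintro rfl; exact h rfl
      simp [h, h']
  rw [Finset.sum_congr rfl this, Finset.sum_ite_eq']
  simp only [Finset.mem_filter, Finset.mem_univ, true_and]

/-! ### Part B: operators pointwise, and transport through `Phi` -/

lemma aop_apply (n i : ℕ) (f : Sp n) (X : SIdx n) :
    aop n i f X =
      if h : i ∈ Finset.Icc 1 n ∧ i ∉ (X : Finset ℕ) then
        ((-1 : ℂ) ^ (((insert i (X : Finset ℕ)).filter (fun k => k < i)).card)) *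
          f (insertIdx n X i h.1)
      else 0 := rfl

lemma adag_apply (n i : ℕ) (f : Sp n) (X : SIdx n) :
    adag n i f X =
      if i ∈ (X : Finset ℕ) then
        ((-1 : ℂ) ^ ((((X : Finset ℕ).erase i).filter (fun k => k < i)).card)) *
          f (eraseIdx n X i)
      else 0 := rfl

lemma Phi_rTensor (n : ℕ) (L : Sp n →ₗ[ℂ] Sp n) (c : SIdx n → ℂ) (φ : SIdx n → SIdx n)
    (hL : ∀ (f : Sp n) (A : SIdx n), L f A = c A * f (φ A)) (t : Sp n ⊗[ℂ] Sp n)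
    (p : SIdx n × SIdx n) :
    Phi n (LinearMap.rTensor (Sp n) L t) p = c p.1 * Phi n t (φ p.1, p.2) := by
  induction t using TensorProduct.induction_on with
  | zero => simp
  | tmul f g => rw [LinearMap.rTensor_tmul, Phi_tmul, Phi_tmul, hL]; ring
  | add x y hx hy => simp only [map_add, Pi.add_apply, hx, hy]; ring

lemma Phi_lTensor (n : ℕ) (L : Sp n →ₗ[ℂ] Sp n) (c : SIdx n → ℂ) (φ : SIdx n → SIdx n)
    (hL : ∀ (f : Sp n) (A : SIdx n), L f A = c A * f (φ A)) (t : Sp n ⊗[ℂ] Sp n)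
    (p : SIdx n × SIdx n) :
    Phi n (LinearMap.lTensor (Sp n) L t) p = c p.2 * Phi n t (p.1, φ p.2) := by
  induction t using TensorProduct.induction_on with
  | zero => simp
  | tmul f g => rw [LinearMap.lTensor_tmul, Phi_tmul, Phi_tmul, hL]; ring
  | add x y hx hy => simp only [map_add, Pi.add_apply, hx, hy]; ring

/-- count of elements `< k+1` vs `< k` -/
lemma filter_lt_succ_card (A : Finset ℕ) (k : ℕ) :
    (A.filter (fun m => m < k + 1)).card
      = (A.filter (fun m => m < k)).card + (if k ∈ A then 1 else 0) := by
  have h1 : A.filter (fun m => m < k + 1)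
      = (A.filter (fun m => m < k)) ∪ (A.filter (fun m => m = k)) := by
    rw [← Finset.filter_or]
    apply Finset.filter_congr
    intro m _
    constructor
    · intro h; omega
    · intro h; omega
  rw [h1, Finset.card_union_of_disjoint, Finset.filter_eq']
  · split <;> simp
  · rw [Finset.disjoint_left]
    intro m hm hm'
    simp only [Finset.mem_filter] at hm hm'
    omega

lemma neg_one_pow_even {a b : ℕ} (h : Even (a + b)) :
    (-1 : ℂ) ^ a * (-1 : ℂ) ^ b = 1 := by
  rw [← pow_add]; exact h.neg_one_pow

lemma neg_one_pow_odd {a b : ℕ} (h : Odd (a + b)) :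
    (-1 : ℂ) ^ a * (-1 : ℂ) ^ b = -1 := by
  rw [← pow_add]; exact h.neg_one_pow

/-- the hop move for `X_k`, `k < n` : replaces `k` by `k+1` -/
def mvX (n k : ℕ) (h : k + 1 ∈ Finset.Icc 1 n) (A : SIdx n) : SIdx n :=
  insertIdx n (eraseIdx n A k) (k + 1) h

/-- the hop move for `Y_k`, `k < n` : replaces `k+1` by `k` -/
def mvY (n k : ℕ) (h : k ∈ Finset.Icc 1 n) (A : SIdx n) : SIdx n :=
  insertIdx n (eraseIdx n A (k + 1)) k h

def mvXn (n : ℕ) (A : SIdx n) : SIdx n := eraseIdx n (eraseIdx n A n) (n - 1)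

def mvYn (n : ℕ) (h1 : n - 1 ∈ Finset.Icc 1 n) (h2 : n ∈ Finset.Icc 1 n) (A : SIdx n) :
    SIdx n := insertIdx n (insertIdx n A n h2) (n - 1) h1

lemma coe_mvX (n k : ℕ) (h : k + 1 ∈ Finset.Icc 1 n) (A : SIdx n) :
    (mvX n k h A : Finset ℕ) = insert (k + 1) ((A : Finset ℕ).erase k) := Eq.trans rfl rfl

lemma coe_mvY (n k : ℕ) (h : k ∈ Finset.Icc 1 n) (A : SIdx n) :
    (mvY n k h A : Finset ℕ) = insert k ((A : Finset ℕ).erase (k + 1)) := Eq.trans rfl rfl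

lemma coe_mvXn (n : ℕ) (A : SIdx n) :
    (mvXn n A : Finset ℕ) = ((A : Finset ℕ).erase n).erase (n - 1) := Eq.trans rfl rfl

lemma coe_mvYn (n : ℕ) (h1 : n - 1 ∈ Finset.Icc 1 n) (h2 : n ∈ Finset.Icc 1 n) (A : SIdx n) :
    (mvYn n h1 h2 A : Finset ℕ) = insert (n - 1) (insert n (A : Finset ℕ)) := Eq.trans rfl rfl

lemma Xop_apply (n k : ℕ) (hk1 : 1 ≤ k) (hkn : k < n) (h : k + 1 ∈ Finset.Icc 1 n)
    (f : Sp n) (A : SIdx n) :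
    Xop n k f A
      = (if k ∈ (A : Finset ℕ) ∧ k + 1 ∉ (A : Finset ℕ) then 1 else 0) * f (mvX n k h A) := by
  have hkne : k ≠ n := Nat.ne_of_lt hkn
  rw [Xop, if_neg hkne]
  simp only [LinearMap.neg_apply, LinearMap.comp_apply, Pi.neg_apply]
  rw [aop_apply]
  by_cases hc : k + 1 ∈ Finset.Icc 1 n ∧ k + 1 ∉ (A : Finset ℕ)
  · rw [dif_pos hc, adag_apply]
    have hins : (insertIdx n A (k + 1) hc.1 : Finset ℕ) = insert (k + 1) (A : Finset ℕ) := rfl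
    by_cases hkA : k ∈ (A : Finset ℕ)
    · have hk' : k ∈ (insertIdx n A (k + 1) hc.1 : Finset ℕ) := by
        rw [hins]; exact Finset.mem_insert_of_mem hkA
      rw [if_pos hk', if_pos ⟨hkA, hc.2⟩]
      have hmove : eraseIdx n (insertIdx n A (k + 1) hc.1) k = mvX n k h A := by
        apply Subtype.ext
        show (insert (k + 1) (A : Finset ℕ)).erase k = insert (k + 1) ((A : Finset ℕ).erase k)
        rw [Finset.erase_insert_of_ne (by omega)]
      rw [hmove]
      have e1 : ((insert (k + 1) (A : Finset ℕ)).filter (fun m => m < k + 1)).card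
          = ((A : Finset ℕ).filter (fun m => m < k)).card + 1 := by
        rw [Finset.filter_insert, if_neg (lt_irrefl _), filter_lt_succ_card, if_pos hkA]
      have e2 : (((insertIdx n A (k + 1) hc.1 : Finset ℕ)).erase k).filter
            (fun m => m < k) = ((A : Finset ℕ).filter (fun m => m < k)) := by
        rw [hins, Finset.filter_erase, Finset.filter_insert, if_neg (by omega),
          Finset.erase_eq_of_notMem (by simp)]
      rw [e2, e1]
      have : (-1 : ℂ) ^ (((A : Finset ℕ).filter (fun m => m < k)).card + 1) *
          ((-1 : ℂ) ^ (((A : Finset ℕ).filter (fun m => m < k)).card) * f (mvX n k h A))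
            = - f (mvX n k h A) := by
        rw [← mul_assoc, neg_one_pow_odd (by simp [Nat.odd_add])]; ring
      rw [this]; ring
    · have hk' : k ∉ (insertIdx n A (k + 1) hc.1 : Finset ℕ) := by
        rw [hins]; simp only [Finset.mem_insert]; push_neg; exact ⟨by omega, hkA⟩
      rw [if_neg hk', if_neg (by tauto)]
      ring
  · rw [dif_neg hc]
    have : ¬ (k ∈ (A : Finset ℕ) ∧ k + 1 ∉ (A : Finset ℕ)) := by tauto
    rw [if_neg this]; ring

lemma mem_le_of_SIdx {n : ℕ} (A : SIdx n) {m : ℕ} (hm : m ∈ (A : Finset ℕ)) :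
    1 ≤ m ∧ m ≤ n := Finset.mem_Icc.1 (Finset.mem_powerset.1 A.2 hm)

lemma Yop_apply (n k : ℕ) (hk1 : 1 ≤ k) (hkn : k < n) (h : k ∈ Finset.Icc 1 n)
    (f : Sp n) (A : SIdx n) :
    Yop n k f A
      = (if k + 1 ∈ (A : Finset ℕ) ∧ k ∉ (A : Finset ℕ) then 1 else 0) * f (mvY n k h A) := by
  have hkne : k ≠ n := Nat.ne_of_lt hkn
  rw [Yop, if_neg hkne]
  simp only [LinearMap.neg_apply, LinearMap.comp_apply, Pi.neg_apply]
  rw [aop_apply]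
  by_cases hc : k ∈ Finset.Icc 1 n ∧ k ∉ (A : Finset ℕ)
  · rw [dif_pos hc, adag_apply]
    have hins : (insertIdx n A k hc.1 : Finset ℕ) = insert k (A : Finset ℕ) := rfl
    by_cases hkA : k + 1 ∈ (A : Finset ℕ)
    · have hk' : k + 1 ∈ (insertIdx n A k hc.1 : Finset ℕ) := by
        rw [hins]; exact Finset.mem_insert_of_mem hkA
      rw [if_pos hk', if_pos ⟨hkA, hc.2⟩]
      have hmove : eraseIdx n (insertIdx n A k hc.1) (k + 1) = mvY n k h A := by
        apply Subtype.ext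
        show (insert k (A : Finset ℕ)).erase (k + 1) = insert k ((A : Finset ℕ).erase (k + 1))
        rw [Finset.erase_insert_of_ne (by omega)]
      rw [hmove]
      have e1 : ((insert k (A : Finset ℕ)).filter (fun m => m < k)).card
          = ((A : Finset ℕ).filter (fun m => m < k)).card := by
        rw [Finset.filter_insert, if_neg (lt_irrefl _)]
      have e2 : (((insert k (A : Finset ℕ)).erase (k + 1)).filter
            (fun m => m < k + 1)).card = ((A : Finset ℕ).filter (fun m => m < k)).card + 1 := by
        rw [Finset.filter_erase, Finset.filter_insert, if_pos (by omega),
          Finset.erase_eq_of_notMem (by simp),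
          Finset.card_insert_of_notMem (by simp [hc.2]), filter_lt_succ_card,
          if_neg hc.2]
      rw [hins, e2, e1]
      have : (-1 : ℂ) ^ (((A : Finset ℕ).filter (fun m => m < k)).card) *
          ((-1 : ℂ) ^ (((A : Finset ℕ).filter (fun m => m < k)).card + 1) * f (mvY n k h A))
            = - f (mvY n k h A) := by
        rw [← mul_assoc, neg_one_pow_odd (by simp [Nat.odd_add])]; ring
      rw [this]; ring
    · have hk' : k + 1 ∉ (insertIdx n A k hc.1 : Finset ℕ) := by
        rw [hins]; simp only [Finset.mem_insert]; push_neg; exact ⟨by omega, hkA⟩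
      rw [if_neg hk', if_neg (by tauto)]
      ring
  · rw [dif_neg hc]
    have : ¬ (k + 1 ∈ (A : Finset ℕ) ∧ k ∉ (A : Finset ℕ)) := by tauto
    rw [if_neg this]; ring

lemma Xn_apply (n : ℕ) (hn : 3 ≤ n) (f : Sp n) (A : SIdx n) :
    Xop n n f A
      = (if n ∈ (A : Finset ℕ) ∧ n - 1 ∈ (A : Finset ℕ) then (-1 : ℂ) else 0)
          * f (mvXn n A) := by
  rw [Xop, if_pos rfl]
  simp only [LinearMap.comp_apply]
  rw [adag_apply]
  by_cases hnA : n ∈ (A : Finset ℕ)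
  · rw [if_pos hnA, adag_apply]
    have hers : (eraseIdx n A n : Finset ℕ) = (A : Finset ℕ).erase n := rfl
    by_cases hn1A : n - 1 ∈ (A : Finset ℕ)
    · have h1 : n - 1 ∈ (eraseIdx n A n : Finset ℕ) := by
        rw [hers]; exact Finset.mem_erase.2 ⟨by omega, hn1A⟩
      rw [if_pos h1, if_pos ⟨hnA, hn1A⟩]
      have hmove : eraseIdx n (eraseIdx n A n) (n - 1) = mvXn n A := rfl
      rw [hmove]
      have e1 : ((A : Finset ℕ).erase n).filter (fun m => m < n) = (A : Finset ℕ).erase n := by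
        apply Finset.filter_true_of_mem
        intro m hm
        have := mem_le_of_SIdx A (Finset.mem_erase.1 hm).2
        have := (Finset.mem_erase.1 hm).1
        omega
      have e2 : (((A : Finset ℕ).erase n).erase (n - 1)).filter (fun m => m < n - 1)
          = ((A : Finset ℕ).erase n).erase (n - 1) := by
        apply Finset.filter_true_of_mem
        intro m hm
        have h2 := Finset.mem_erase.1 hm
        have h3 := Finset.mem_erase.1 h2.2
        have := mem_le_of_SIdx A h3.2
        omega
      have c1 : ((A : Finset ℕ).erase n).card = (A : Finset ℕ).card - 1 :=
        Finset.card_erase_of_mem hnA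
      have c2 : (((A : Finset ℕ).erase n).erase (n - 1)).card
          = ((A : Finset ℕ).erase n).card - 1 := Finset.card_erase_of_mem h1
      have hcard : 2 ≤ (A : Finset ℕ).card := by
        have : 1 ≤ ((A : Finset ℕ).erase n).card := Finset.card_pos.2 ⟨n - 1, h1⟩
        omega
      rw [hers, e1, e2, c1, c2, ← mul_assoc,
        neg_one_pow_odd (Nat.odd_iff.2 (by omega))]
    · have h1 : n - 1 ∉ (eraseIdx n A n : Finset ℕ) := by
        rw [hers]; simp [Finset.mem_erase, hn1A]
      rw [if_neg h1, if_neg (by tauto)]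
      ring
  · rw [if_neg hnA, if_neg (by tauto)]
    ring

lemma Yn_apply (n : ℕ) (hn : 3 ≤ n) (h1 : n - 1 ∈ Finset.Icc 1 n) (h2 : n ∈ Finset.Icc 1 n)
    (f : Sp n) (A : SIdx n) :
    Yop n n f A
      = (if n ∉ (A : Finset ℕ) ∧ n - 1 ∉ (A : Finset ℕ) then (1 : ℂ) else 0)
          * f (mvYn n h1 h2 A) := by
  rw [Yop, if_pos rfl]
  simp only [LinearMap.comp_apply]
  rw [aop_apply]
  by_cases hnA : n ∉ (A : Finset ℕ)
  · rw [dif_pos ⟨h2, hnA⟩, aop_apply]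
    have hins : (insertIdx n A n h2 : Finset ℕ) = insert n (A : Finset ℕ) := rfl
    by_cases hn1A : n - 1 ∉ (A : Finset ℕ)
    · have hx : n - 1 ∉ (insertIdx n A n h2 : Finset ℕ) := by
        rw [hins]; simp only [Finset.mem_insert]; push_neg; exact ⟨by omega, hn1A⟩
      rw [dif_pos ⟨h1, hx⟩, if_pos ⟨hnA, hn1A⟩]
      have hmove : insertIdx n (insertIdx n A n h2) (n - 1) h1 = mvYn n h1 h2 A := rfl
      rw [hmove]
      have e1 : (insert n (A : Finset ℕ)).filter (fun m => m < n) = (A : Finset ℕ) := by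
        rw [Finset.filter_insert, if_neg (lt_irrefl _)]
        apply Finset.filter_true_of_mem
        intro m hm
        have := mem_le_of_SIdx A hm
        have : m ≠ n := fun hmn => hnA (hmn ▸ hm)
        omega
      have e2 : (insert (n - 1) (insert n (A : Finset ℕ))).filter
            (fun m => m < n - 1) = (A : Finset ℕ) := by
        rw [Finset.filter_insert, if_neg (lt_irrefl _), Finset.filter_insert,
          if_neg (by omega)]
        apply Finset.filter_true_of_mem
        intro m hm
        have := mem_le_of_SIdx A hm
        have : m ≠ n := fun hmn => hnA (hmn ▸ hm)
        have : m ≠ n - 1 := fun hmn => hn1A (hmn ▸ hm)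
        omega
      rw [hins, e1, e2, ← mul_assoc, neg_one_pow_even (by simp [Nat.even_add])]
    · push_neg at hn1A
      have hx : ¬ (n - 1 ∈ Finset.Icc 1 n ∧ n - 1 ∉ (insertIdx n A n h2 : Finset ℕ)) := by
        rw [hins]
        push_neg
        intro _
        exact Finset.mem_insert_of_mem hn1A
      rw [dif_neg hx, if_neg (by tauto)]
      ring
  · push_neg at hnA
    rw [dif_neg (by tauto), if_neg (by tauto), zero_mul]

/-! ### Part C: integer sign helpers and index computations -/

lemma subset_U {n : ℕ} (A : SIdx n) : (A : Finset ℕ) ⊆ Finset.Icc 1 n :=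
  Finset.mem_powerset.1 A.2

lemma sgnZ_even {a b : ℤ} (h : (a - b) % 2 = 0) : (-1 : ℂ) ^ a = (-1 : ℂ) ^ b := by
  have hab : a = b + (a - b) := by ring
  rw [hab, zpow_add₀ (by norm_num : (-1 : ℂ) ≠ 0),
    (Int.even_iff.2 (by omega) : Even (a - b)).neg_one_zpow, mul_one]

lemma sgnZ_odd {a b : ℤ} (h : (a - b) % 2 = 1) : (-1 : ℂ) ^ a = -(-1 : ℂ) ^ b := by
  have hab : a = b + (a - b) := by ring
  rw [hab, zpow_add₀ (by norm_num : (-1 : ℂ) ≠ 0),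
    (Int.odd_iff.2 (by omega) : Odd (a - b)).neg_one_zpow]
  ring

/-- change of `I1` under replacing `a ∈ A` by `b ∉ A`. -/
lemma I1_hop (n a b : ℕ) (A : Finset ℕ) (ha : a ∈ A) (hb : b ∉ A) :
    I1 n (insert b (A.erase a)) = I1 n A + b - a := by
  unfold I1
  rw [Finset.sum_insert (fun hc => hb (Finset.mem_of_mem_erase hc)),
    Finset.card_insert_of_notMem (fun hc => hb (Finset.mem_of_mem_erase hc)),
    Finset.card_erase_of_mem ha]
  rw [← Finset.sum_erase_add A _ ha]
  have hc : 1 ≤ A.card := Finset.card_pos.2 ⟨a, ha⟩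
  have : (A.card - 1 + 1 : ℕ) = A.card := by omega
  rw [this]
  push_cast
  ring

lemma card_hop (a b : ℕ) (A : Finset ℕ) (ha : a ∈ A) (hb : b ∉ A) :
    (insert b (A.erase a)).card = A.card := by
  rw [Finset.card_insert_of_notMem (fun hc => hb (Finset.mem_of_mem_erase hc)),
    Finset.card_erase_of_mem ha]
  have hc : 1 ≤ A.card := Finset.card_pos.2 ⟨a, ha⟩
  omega

/-- change of the `< i` count under replacing `a ∈ A` by `b ∉ A`. -/
lemma filter_card_hop (i a b : ℕ) (A : Finset ℕ) (ha : a ∈ A) (hb : b ∉ A) :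
    ((insert b (A.erase a)).filter (fun m => m < i)).card + (if a < i then 1 else 0)
      = (A.filter (fun m => m < i)).card + (if b < i then 1 else 0) := by
  have hbf : b ∉ (A.filter (fun m => m < i)).erase a := by
    intro hc
    exact hb (Finset.mem_of_mem_filter b (Finset.mem_of_mem_erase hc))
  rw [Finset.filter_insert, Finset.filter_erase]
  by_cases hbi : b < i
  · rw [if_pos hbi, if_pos hbi, Finset.card_insert_of_notMem hbf]
    by_cases hai : a < i
    · have haf : a ∈ A.filter (fun m => m < i) := Finset.mem_filter.2 ⟨ha, hai⟩
      rw [if_pos hai, Finset.card_erase_of_mem haf]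
      have : 1 ≤ (A.filter (fun m => m < i)).card := Finset.card_pos.2 ⟨a, haf⟩
      omega
    · have haf : a ∉ A.filter (fun m => m < i) := fun hc => hai (Finset.mem_filter.1 hc).2
      rw [if_neg hai, Finset.erase_eq_of_notMem haf]
  · rw [if_neg hbi, if_neg hbi]
    by_cases hai : a < i
    · have haf : a ∈ A.filter (fun m => m < i) := Finset.mem_filter.2 ⟨ha, hai⟩
      rw [if_pos hai, Finset.card_erase_of_mem haf]
      have : 1 ≤ (A.filter (fun m => m < i)).card := Finset.card_pos.2 ⟨a, haf⟩
      omega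
    · have haf : a ∉ A.filter (fun m => m < i) := fun hc => hai (Finset.mem_filter.1 hc).2
      rw [if_neg hai, Finset.erase_eq_of_notMem haf]

/-- `I1` after removing both `n` and `n-1`. -/
lemma I1_erase2 (n : ℕ) (hn : 3 ≤ n) (A : Finset ℕ) (h1 : n ∈ A) (h2 : n - 1 ∈ A) :
    I1 n ((A.erase n).erase (n - 1)) = I1 n A + 1 := by
  unfold I1
  have h2' : n - 1 ∈ A.erase n := Finset.mem_erase.2 ⟨by omega, h2⟩
  rw [Finset.card_erase_of_mem h2', Finset.card_erase_of_mem h1]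
  have s1 : (∑ x ∈ (A.erase n).erase (n - 1), (x : ℤ)) + ((n - 1 : ℕ) : ℤ)
      = ∑ x ∈ A.erase n, (x : ℤ) := Finset.sum_erase_add _ _ h2'
  have s2 : (∑ x ∈ A.erase n, (x : ℤ)) + (n : ℤ) = ∑ x ∈ A, (x : ℤ) :=
    Finset.sum_erase_add _ _ h1
  have hc1 : 1 ≤ (A.erase n).card := Finset.card_pos.2 ⟨n - 1, h2'⟩
  have hc2 : (A.erase n).card = A.card - 1 := Finset.card_erase_of_mem h1
  have hc3 : 1 ≤ A.card := Finset.card_pos.2 ⟨n, h1⟩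
  have e1 : ((A.card - 1 - 1 : ℕ) : ℤ) = (A.card : ℤ) - 2 := by omega
  have e2 : ((n - 1 : ℕ) : ℤ) = (n : ℤ) - 1 := by omega
  rw [e1]
  rw [e2] at s1
  linarith [s1, s2]

lemma card_erase2 (n : ℕ) (A : Finset ℕ) (h1 : n ∈ A) (h2 : n - 1 ∈ A) (hn : 3 ≤ n) :
    ((A.erase n).erase (n - 1)).card + 2 = A.card := by
  have h2' : n - 1 ∈ A.erase n := Finset.mem_erase.2 ⟨by omega, h2⟩
  rw [Finset.card_erase_of_mem h2', Finset.card_erase_of_mem h1]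
  have hc1 : 1 ≤ (A.erase n).card := Finset.card_pos.2 ⟨n - 1, h2'⟩
  have hc2 : (A.erase n).card = A.card - 1 := Finset.card_erase_of_mem h1
  omega

/-- `I1` after inserting both `n` and `n-1`. -/
lemma I1_insert2 (n : ℕ) (hn : 3 ≤ n) (A : Finset ℕ) (h1 : n ∉ A) (h2 : n - 1 ∉ A) :
    I1 n (insert (n - 1) (insert n A)) = I1 n A - 1 := by
  unfold I1
  have h2' : n - 1 ∉ insert n A := by
    simp only [Finset.mem_insert]; push_neg; exact ⟨by omega, h2⟩
  rw [Finset.sum_insert h2', Finset.sum_insert h1,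
    Finset.card_insert_of_notMem h2', Finset.card_insert_of_notMem h1]
  have e2 : ((n - 1 : ℕ) : ℤ) = (n : ℤ) - 1 := by omega
  push_cast
  rw [e2]
  ring

lemma card_insert2 (n : ℕ) (A : Finset ℕ) (h1 : n ∉ A) (h2 : n - 1 ∉ A) (hn : 3 ≤ n) :
    (insert (n - 1) (insert n A)).card = A.card + 2 := by
  have h2' : n - 1 ∉ insert n A := by
    simp only [Finset.mem_insert]; push_neg; exact ⟨by omega, h2⟩
  rw [Finset.card_insert_of_notMem h2', Finset.card_insert_of_notMem h1]

/-! ### Part D0: set-theoretic structure of the index pairs -/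

def OmLs (n i : ℕ) (S T : Finset ℕ) : Prop :=
  S ∪ T = Finset.Icc 1 n ∧ S ∩ T = {i}

def OmHs (n i : ℕ) (S T : Finset ℕ) : Prop :=
  S ∪ T = Finset.Icc 1 n \ {i} ∧ Disjoint S T

lemma OmLs_comm {n i : ℕ} {S T : Finset ℕ} : OmLs n i S T ↔ OmLs n i T S := by
  unfold OmLs; rw [Finset.union_comm, Finset.inter_comm]

lemma OmHs_comm {n i : ℕ} {S T : Finset ℕ} : OmHs n i S T ↔ OmHs n i T S := by
  unfold OmHs; rw [Finset.union_comm, disjoint_comm]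

lemma OmLs_mem {n i : ℕ} {S T : Finset ℕ} (h : OmLs n i S T) : i ∈ S ∧ i ∈ T := by
  have := Finset.ext_iff.1 h.2 i
  simp only [Finset.mem_inter, Finset.mem_singleton] at this
  exact this.2 trivial

/-- dichotomy for the element `b ≠ a` in a low pair. -/
lemma SL0 {n a b : ℕ} {S T : Finset ℕ} (h : OmLs n a S T) (hb : b ∈ Finset.Icc 1 n)
    (hba : b ≠ a) : (b ∈ S ∧ b ∉ T) ∨ (b ∈ T ∧ b ∉ S) := by
  have hu := Finset.ext_iff.1 h.1 b
  have hi := Finset.ext_iff.1 h.2 b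
  simp only [Finset.mem_union, Finset.mem_inter, Finset.mem_singleton] at hu hi
  tauto

/-- dichotomy for the element `a ≠ b` in a high pair. -/
lemma HL0 {n a b : ℕ} {S T : Finset ℕ} (h : OmHs n b S T) (ha : a ∈ Finset.Icc 1 n)
    (hab : a ≠ b) : (a ∈ S ∧ a ∉ T) ∨ (a ∈ T ∧ a ∉ S) := by
  have hu := Finset.ext_iff.1 h.1 a
  have hd : a ∈ S → a ∉ T := fun hx => Finset.disjoint_left.1 h.2 hx
  simp only [Finset.mem_union, Finset.mem_sdiff, Finset.mem_singleton] at hu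
  tauto

/-- match, forward: if the hopped pair is a low `b`-pair then the original is a low `a`-pair. -/
lemma SL1 {n a b : ℕ} {S T : Finset ℕ} (hab : a ≠ b) (haU : a ∈ Finset.Icc 1 n)
    (ha : a ∈ S) (hb : b ∉ S) (h : OmLs n b (insert b (S.erase a)) T) :
    OmLs n a S T ∧ b ∈ T := by
  have hbT : b ∈ T := (OmLs_mem h).2
  have haT : a ∈ T := by
    have hu := Finset.ext_iff.1 h.1 a
    simp only [Finset.mem_union, Finset.mem_insert, Finset.mem_erase] at hu
    have : a ∈ Finset.Icc 1 n := haU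
    tauto
  refine ⟨⟨?_, ?_⟩, hbT⟩
  · ext m
    have hu := Finset.ext_iff.1 h.1 m
    simp only [Finset.mem_union, Finset.mem_insert, Finset.mem_erase] at hu
    simp only [Finset.mem_union]
    by_cases hma : m = a <;> by_cases hmb : m = b
    · omega
    · subst hma; tauto
    · subst hmb; tauto
    · tauto
  · ext m
    have hi := Finset.ext_iff.1 h.2 m
    simp only [Finset.mem_inter, Finset.mem_insert, Finset.mem_erase,
      Finset.mem_singleton] at hi
    simp only [Finset.mem_inter, Finset.mem_singleton]
    by_cases hma : m = a <;> by_cases hmb : m = b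
    · omega
    · subst hma; tauto
    · subst hmb; tauto
    · tauto

/-- match, backward. -/
lemma SL2 {n a b : ℕ} {S T : Finset ℕ} (hab : a ≠ b)
    (h : OmLs n a S T) (hbT : b ∈ T) :
    (a ∈ S ∧ b ∉ S) ∧ OmLs n b (insert b (S.erase a)) T := by
  have haS : a ∈ S := (OmLs_mem h).1
  have haT : a ∈ T := (OmLs_mem h).2
  have hbS : b ∉ S := by
    intro hc
    have hi := Finset.ext_iff.1 h.2 b
    simp only [Finset.mem_inter, Finset.mem_singleton] at hi
    exact hab (hi.1 ⟨hc, hbT⟩).symm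
  refine ⟨⟨haS, hbS⟩, ?_, ?_⟩
  · ext m
    have hu := Finset.ext_iff.1 h.1 m
    simp only [Finset.mem_union] at hu
    simp only [Finset.mem_union, Finset.mem_insert, Finset.mem_erase]
    by_cases hma : m = a <;> by_cases hmb : m = b
    · omega
    · subst hma; tauto
    · subst hmb
      constructor
      · intro _; exact hu.1 (Or.inr hbT)
      · intro _; tauto
    · tauto
  · ext m
    have hi := Finset.ext_iff.1 h.2 m
    simp only [Finset.mem_inter, Finset.mem_singleton] at hi
    simp only [Finset.mem_inter, Finset.mem_insert, Finset.mem_erase, Finset.mem_singleton]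
    by_cases hma : m = a <;> by_cases hmb : m = b
    · omega
    · subst hma; tauto
    · subst hmb; tauto
    · tauto

/-- the hopped pair can never be a low `a`-pair. -/
lemma SL3 {n a b : ℕ} {S T : Finset ℕ} (hab : a ≠ b)
    (h : OmLs n a (insert b (S.erase a)) T) : False := by
  have := (OmLs_mem h).1
  simp only [Finset.mem_insert, Finset.mem_erase] at this
  tauto

/-- cancellation, forward. -/
lemma SL4 {n a b i : ℕ} {S T : Finset ℕ} (hab : a ≠ b) (haU : a ∈ Finset.Icc 1 n)
    (hia : i ≠ a) (hib : i ≠ b) (ha : a ∈ S) (hb : b ∉ S)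
    (h : OmLs n i (insert b (S.erase a)) T) :
    (a ∈ T ∧ b ∉ T) ∧ OmLs n i S (insert b (T.erase a)) := by
  have haT : a ∈ T := by
    have hu := Finset.ext_iff.1 h.1 a
    simp only [Finset.mem_union, Finset.mem_insert, Finset.mem_erase] at hu
    tauto
  have hbT : b ∉ T := by
    intro hc
    have hi := Finset.ext_iff.1 h.2 b
    simp only [Finset.mem_inter, Finset.mem_insert, Finset.mem_erase,
      Finset.mem_singleton] at hi
    have : b = i := by tauto
    exact hib this.symm
  refine ⟨⟨haT, hbT⟩, ?_, ?_⟩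
  · ext m
    have hu := Finset.ext_iff.1 h.1 m
    simp only [Finset.mem_union, Finset.mem_insert, Finset.mem_erase] at hu
    simp only [Finset.mem_union, Finset.mem_insert, Finset.mem_erase]
    by_cases hma : m = a <;> by_cases hmb : m = b
    · omega
    · subst hma; tauto
    · subst hmb; tauto
    · tauto
  · ext m
    have hi := Finset.ext_iff.1 h.2 m
    simp only [Finset.mem_inter, Finset.mem_insert, Finset.mem_erase,
      Finset.mem_singleton] at hi
    simp only [Finset.mem_inter, Finset.mem_insert, Finset.mem_erase, Finset.mem_singleton]
    by_cases hma : m = a <;> by_cases hmb : m = b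
    · omega
    · subst hma; tauto
    · subst hmb; tauto
    · tauto

/-- high match, forward. -/
lemma HL1 {n a b : ℕ} {S T : Finset ℕ} (hab : a ≠ b) (haU : a ∈ Finset.Icc 1 n)
    (ha : a ∈ S) (hb : b ∉ S) (h : OmHs n a (insert b (S.erase a)) T) :
    OmHs n b S T ∧ a ∉ T := by
  have hbS' : b ∈ insert b (S.erase a) := Finset.mem_insert_self _ _
  have hbT : b ∉ T := Finset.disjoint_left.1 h.2 hbS'
  have haT : a ∉ T := by
    intro hc
    have hu := Finset.ext_iff.1 h.1 a
    simp only [Finset.mem_union, Finset.mem_insert, Finset.mem_erase, Finset.mem_sdiff,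
      Finset.mem_singleton] at hu
    tauto
  refine ⟨⟨?_, ?_⟩, haT⟩
  · ext m
    have hu := Finset.ext_iff.1 h.1 m
    simp only [Finset.mem_union, Finset.mem_insert, Finset.mem_erase, Finset.mem_sdiff,
      Finset.mem_singleton] at hu
    simp only [Finset.mem_union, Finset.mem_sdiff, Finset.mem_singleton]
    by_cases hma : m = a <;> by_cases hmb : m = b
    · omega
    · subst hma; tauto
    · subst hmb; tauto
    · tauto
  · rw [Finset.disjoint_left]
    intro m hmS hmT
    by_cases hma : m = a
    · subst hma; exact haT hmT
    · exact Finset.disjoint_left.1 h.2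
        (Finset.mem_insert_of_mem (Finset.mem_erase.2 ⟨hma, hmS⟩)) hmT

/-- high match, backward. -/
lemma HL2 {n a b : ℕ} {S T : Finset ℕ} (hab : a ≠ b) (haU : a ∈ Finset.Icc 1 n)
    (hbU : b ∈ Finset.Icc 1 n) (h : OmHs n b S T) (ha : a ∈ S) :
    (a ∈ S ∧ b ∉ S) ∧ OmHs n a (insert b (S.erase a)) T := by
  have hbST : b ∉ S ∧ b ∉ T := by
    have hu := Finset.ext_iff.1 h.1 b
    simp only [Finset.mem_union, Finset.mem_sdiff, Finset.mem_singleton] at hu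
    tauto
  have haT : a ∉ T := Finset.disjoint_left.1 h.2 ha
  refine ⟨⟨ha, hbST.1⟩, ?_, ?_⟩
  · ext m
    have hu := Finset.ext_iff.1 h.1 m
    simp only [Finset.mem_union, Finset.mem_sdiff, Finset.mem_singleton] at hu
    simp only [Finset.mem_union, Finset.mem_insert, Finset.mem_erase, Finset.mem_sdiff,
      Finset.mem_singleton]
    by_cases hma : m = a <;> by_cases hmb : m = b
    · omega
    · subst hma; tauto
    · subst hmb; tauto
    · tauto
  · rw [Finset.disjoint_left]
    intro m hmS hmT
    simp only [Finset.mem_insert, Finset.mem_erase] at hmS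
    rcases hmS with rfl | ⟨_, hmS⟩
    · exact hbST.2 hmT
    · exact Finset.disjoint_left.1 h.2 hmS hmT

/-- high cancellation, forward. -/
lemma HL3 {n a b i : ℕ} {S T : Finset ℕ} (hab : a ≠ b) (haU : a ∈ Finset.Icc 1 n)
    (hia : i ≠ a) (hib : i ≠ b) (ha : a ∈ S) (hb : b ∉ S)
    (h : OmHs n i (insert b (S.erase a)) T) :
    (a ∈ T ∧ b ∉ T) ∧ OmHs n i S (insert b (T.erase a)) := by
  have hbS' : b ∈ insert b (S.erase a) := Finset.mem_insert_self _ _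
  have hbT : b ∉ T := Finset.disjoint_left.1 h.2 hbS'
  have haT : a ∈ T := by
    have hu := Finset.ext_iff.1 h.1 a
    simp only [Finset.mem_union, Finset.mem_insert, Finset.mem_erase, Finset.mem_sdiff,
      Finset.mem_singleton] at hu
    tauto
  refine ⟨⟨haT, hbT⟩, ?_, ?_⟩
  · ext m
    have hu := Finset.ext_iff.1 h.1 m
    simp only [Finset.mem_union, Finset.mem_insert, Finset.mem_erase, Finset.mem_sdiff,
      Finset.mem_singleton] at hu
    simp only [Finset.mem_union, Finset.mem_insert, Finset.mem_erase, Finset.mem_sdiff,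
      Finset.mem_singleton]
    by_cases hma : m = a <;> by_cases hmb : m = b
    · omega
    · subst hma; tauto
    · subst hmb; tauto
    · tauto
  · rw [Finset.disjoint_left]
    intro m hmS hmT
    simp only [Finset.mem_insert, Finset.mem_erase] at hmT
    rcases hmT with rfl | ⟨hma, hmT⟩
    · exact hb hmS
    · exact Finset.disjoint_left.1 h.2
        (Finset.mem_insert_of_mem (Finset.mem_erase.2 ⟨hma, hmS⟩)) hmT

/-- the hopped pair can never be a high `b`-pair. -/
lemma HL4 {n a b : ℕ} {S T : Finset ℕ}
    (h : OmHs n b (insert b (S.erase a)) T) : False := by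
  have hb : b ∈ insert b (S.erase a) ∪ T :=
    Finset.mem_union_left _ (Finset.mem_insert_self _ _)
  rw [h.1] at hb
  simp at hb

section KnSetLemmas

variable {n i : ℕ} {S T : Finset ℕ}

/-- `Xn`, low coefficients: cancellation. -/
lemma XnL_cancel (hn : 3 ≤ n) (hnS : n ∈ S) (hn1S : n - 1 ∈ S)
    (h : OmLs n i ((S.erase n).erase (n - 1)) T) :
    (n ∈ T ∧ n - 1 ∈ T) ∧ i ≠ n ∧ i ≠ n - 1 ∧ OmLs n i S ((T.erase n).erase (n - 1)) := by
  have hne1 : n ≠ n - 1 := by omega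
  have hne2 : n - 1 ≠ n := by omega
  have hf1 : 1 ≤ n ∧ n ≤ n := by omega
  have hf2 : 1 ≤ n - 1 ∧ n - 1 ≤ n := by omega
  have hiST := OmLs_mem h
  simp only [Finset.mem_erase] at hiST
  have hin : i ≠ n := hiST.1.2.1
  have hin1 : i ≠ n - 1 := hiST.1.1
  have hnT : n ∈ T := by
    have hu := Finset.ext_iff.1 h.1 n
    simp only [Finset.mem_union, Finset.mem_erase, Finset.mem_Icc] at hu
    tauto
  have hn1T : n - 1 ∈ T := by
    have hu := Finset.ext_iff.1 h.1 (n - 1)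
    simp only [Finset.mem_union, Finset.mem_erase, Finset.mem_Icc] at hu
    tauto
  refine ⟨⟨hnT, hn1T⟩, hin, hin1, ?_, ?_⟩
  · ext m
    have hu := Finset.ext_iff.1 h.1 m
    simp only [Finset.mem_union, Finset.mem_erase, Finset.mem_Icc] at hu
    simp only [Finset.mem_union, Finset.mem_erase, Finset.mem_Icc]
    by_cases hmn : m = n <;> by_cases hmn1 : m = n - 1
    · omega
    · subst hmn; tauto
    · subst hmn1; tauto
    · tauto
  · ext m
    have hi := Finset.ext_iff.1 h.2 m
    simp only [Finset.mem_inter, Finset.mem_erase, Finset.mem_singleton] at hi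
    simp only [Finset.mem_inter, Finset.mem_erase, Finset.mem_singleton]
    by_cases hmn : m = n <;> by_cases hmn1 : m = n - 1
    · omega
    · subst hmn; tauto
    · subst hmn1; tauto
    · tauto

/-- `Xn`, high coefficient at `i = n`, forward. -/
lemma XnH_n_fwd (hn : 3 ≤ n) (hnS : n ∈ S) (hn1S : n - 1 ∈ S)
    (h : OmHs n n ((S.erase n).erase (n - 1)) T) :
    OmLs n (n - 1) S T ∧ n ∉ T := by
  have hne1 : n ≠ n - 1 := by omega
  have hne2 : n - 1 ≠ n := by omega
  have hf1 : 1 ≤ n ∧ n ≤ n := by omega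
  have hf2 : 1 ≤ n - 1 ∧ n - 1 ≤ n := by omega
  have hnT : n ∉ T := by
    intro hc
    have hu := Finset.ext_iff.1 h.1 n
    simp only [Finset.mem_union, Finset.mem_erase, Finset.mem_sdiff, Finset.mem_Icc,
      Finset.mem_singleton] at hu
    tauto
  have hn1T : n - 1 ∈ T := by
    have hu := Finset.ext_iff.1 h.1 (n - 1)
    simp only [Finset.mem_union, Finset.mem_erase, Finset.mem_sdiff, Finset.mem_Icc,
      Finset.mem_singleton] at hu
    tauto
  refine ⟨⟨?_, ?_⟩, hnT⟩
  · ext m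
    have hu := Finset.ext_iff.1 h.1 m
    have hd : m ∈ (S.erase n).erase (n - 1) → m ∉ T := fun hx => Finset.disjoint_left.1 h.2 hx
    simp only [Finset.mem_union, Finset.mem_erase, Finset.mem_sdiff, Finset.mem_Icc,
      Finset.mem_singleton] at hu hd
    simp only [Finset.mem_union, Finset.mem_Icc]
    by_cases hmn : m = n <;> by_cases hmn1 : m = n - 1
    · omega
    · subst hmn; tauto
    · subst hmn1; tauto
    · tauto
  · ext m
    have hd : m ∈ (S.erase n).erase (n - 1) → m ∉ T := fun hx => Finset.disjoint_left.1 h.2 hx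
    simp only [Finset.mem_erase] at hd
    simp only [Finset.mem_inter, Finset.mem_singleton]
    by_cases hmn : m = n <;> by_cases hmn1 : m = n - 1
    · omega
    · subst hmn; tauto
    · subst hmn1; tauto
    · tauto

/-- `Xn`, high coefficient at `i = n`, backward. -/
lemma XnH_n_bwd (hn : 3 ≤ n) (h : OmLs n (n - 1) S T) (hnS : n ∈ S) :
    (n - 1 ∈ S ∧ n ∉ T) ∧ OmHs n n ((S.erase n).erase (n - 1)) T := by
  have hne1 : n ≠ n - 1 := by omega
  have hne2 : n - 1 ≠ n := by omega
  have hf1 : 1 ≤ n ∧ n ≤ n := by omega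
  have hf2 : 1 ≤ n - 1 ∧ n - 1 ≤ n := by omega
  have hmem := OmLs_mem h
  have hnT : n ∉ T := by
    intro hc
    have hi := Finset.ext_iff.1 h.2 n
    simp only [Finset.mem_inter, Finset.mem_singleton] at hi
    tauto
  refine ⟨⟨hmem.1, hnT⟩, ?_, ?_⟩
  · ext m
    have hu := Finset.ext_iff.1 h.1 m
    have hi := Finset.ext_iff.1 h.2 m
    simp only [Finset.mem_union, Finset.mem_inter, Finset.mem_singleton, Finset.mem_Icc]
      at hu hi
    simp only [Finset.mem_union, Finset.mem_erase, Finset.mem_sdiff, Finset.mem_Icc,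
      Finset.mem_singleton]
    by_cases hmn : m = n <;> by_cases hmn1 : m = n - 1
    · omega
    · subst hmn; tauto
    · subst hmn1; tauto
    · tauto
  · rw [Finset.disjoint_left]
    intro m hmS hmT
    have hi := Finset.ext_iff.1 h.2 m
    simp only [Finset.mem_inter, Finset.mem_singleton] at hi
    simp only [Finset.mem_erase] at hmS
    tauto

/-- `Xn`, high coefficient at `i = n - 1`, forward. -/
lemma XnH_n1_fwd (hn : 3 ≤ n) (hnS : n ∈ S) (hn1S : n - 1 ∈ S)
    (h : OmHs n (n - 1) ((S.erase n).erase (n - 1)) T) :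
    OmLs n n S T ∧ n - 1 ∉ T := by
  have hne1 : n ≠ n - 1 := by omega
  have hne2 : n - 1 ≠ n := by omega
  have hf1 : 1 ≤ n ∧ n ≤ n := by omega
  have hf2 : 1 ≤ n - 1 ∧ n - 1 ≤ n := by omega
  have hn1T : n - 1 ∉ T := by
    intro hc
    have hu := Finset.ext_iff.1 h.1 (n - 1)
    simp only [Finset.mem_union, Finset.mem_erase, Finset.mem_sdiff, Finset.mem_Icc,
      Finset.mem_singleton] at hu
    tauto
  have hnT : n ∈ T := by
    have hu := Finset.ext_iff.1 h.1 n
    simp only [Finset.mem_union, Finset.mem_erase, Finset.mem_sdiff, Finset.mem_Icc,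
      Finset.mem_singleton] at hu
    tauto
  refine ⟨⟨?_, ?_⟩, hn1T⟩
  · ext m
    have hu := Finset.ext_iff.1 h.1 m
    simp only [Finset.mem_union, Finset.mem_erase, Finset.mem_sdiff, Finset.mem_Icc,
      Finset.mem_singleton] at hu
    simp only [Finset.mem_union, Finset.mem_Icc]
    by_cases hmn : m = n <;> by_cases hmn1 : m = n - 1
    · omega
    · subst hmn; tauto
    · subst hmn1; tauto
    · tauto
  · ext m
    have hd : m ∈ (S.erase n).erase (n - 1) → m ∉ T := fun hx => Finset.disjoint_left.1 h.2 hx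
    simp only [Finset.mem_erase] at hd
    simp only [Finset.mem_inter, Finset.mem_singleton]
    by_cases hmn : m = n <;> by_cases hmn1 : m = n - 1
    · omega
    · subst hmn; tauto
    · subst hmn1; tauto
    · tauto

/-- `Xn`, high coefficient at `i = n - 1`, backward. -/
lemma XnH_n1_bwd (hn : 3 ≤ n) (h : OmLs n n S T) (hn1S : n - 1 ∈ S) :
    (n ∈ S ∧ n - 1 ∉ T) ∧ OmHs n (n - 1) ((S.erase n).erase (n - 1)) T := by
  have hne1 : n ≠ n - 1 := by omega
  have hne2 : n - 1 ≠ n := by omega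
  have hf1 : 1 ≤ n ∧ n ≤ n := by omega
  have hf2 : 1 ≤ n - 1 ∧ n - 1 ≤ n := by omega
  have hmem := OmLs_mem h
  have hn1T : n - 1 ∉ T := by
    intro hc
    have hi := Finset.ext_iff.1 h.2 (n - 1)
    simp only [Finset.mem_inter, Finset.mem_singleton] at hi
    tauto
  refine ⟨⟨hmem.1, hn1T⟩, ?_, ?_⟩
  · ext m
    have hu := Finset.ext_iff.1 h.1 m
    have hi := Finset.ext_iff.1 h.2 m
    simp only [Finset.mem_union, Finset.mem_inter, Finset.mem_singleton, Finset.mem_Icc]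
      at hu hi
    simp only [Finset.mem_union, Finset.mem_erase, Finset.mem_sdiff, Finset.mem_Icc,
      Finset.mem_singleton]
    by_cases hmn : m = n <;> by_cases hmn1 : m = n - 1
    · omega
    · subst hmn; tauto
    · subst hmn1; tauto
    · tauto
  · rw [Finset.disjoint_left]
    intro m hmS hmT
    have hi := Finset.ext_iff.1 h.2 m
    simp only [Finset.mem_inter, Finset.mem_singleton] at hi
    simp only [Finset.mem_erase] at hmS
    tauto

/-- `Xn`, high coefficients, cancellation. -/
lemma XnH_cancel (hn : 3 ≤ n) (hnS : n ∈ S) (hn1S : n - 1 ∈ S) (hin : i ≠ n)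
    (hin1 : i ≠ n - 1) (h : OmHs n i ((S.erase n).erase (n - 1)) T) :
    (n ∈ T ∧ n - 1 ∈ T) ∧ OmHs n i S ((T.erase n).erase (n - 1)) := by
  have hne1 : n ≠ n - 1 := by omega
  have hne2 : n - 1 ≠ n := by omega
  have hf1 : 1 ≤ n ∧ n ≤ n := by omega
  have hf2 : 1 ≤ n - 1 ∧ n - 1 ≤ n := by omega
  have hnT : n ∈ T := by
    have hu := Finset.ext_iff.1 h.1 n
    simp only [Finset.mem_union, Finset.mem_erase, Finset.mem_sdiff, Finset.mem_Icc,
      Finset.mem_singleton] at hu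
    tauto
  have hn1T : n - 1 ∈ T := by
    have hu := Finset.ext_iff.1 h.1 (n - 1)
    simp only [Finset.mem_union, Finset.mem_erase, Finset.mem_sdiff, Finset.mem_Icc,
      Finset.mem_singleton] at hu
    tauto
  refine ⟨⟨hnT, hn1T⟩, ?_, ?_⟩
  · ext m
    have hu := Finset.ext_iff.1 h.1 m
    simp only [Finset.mem_union, Finset.mem_erase, Finset.mem_sdiff, Finset.mem_Icc,
      Finset.mem_singleton] at hu
    simp only [Finset.mem_union, Finset.mem_erase, Finset.mem_sdiff, Finset.mem_Icc,
      Finset.mem_singleton]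
    by_cases hmn : m = n <;> by_cases hmn1 : m = n - 1
    · omega
    · subst hmn; tauto
    · subst hmn1; tauto
    · tauto
  · rw [Finset.disjoint_left]
    intro m hmS hmT
    have hd : m ∈ (S.erase n).erase (n - 1) → m ∉ T := fun hx => Finset.disjoint_left.1 h.2 hx
    simp only [Finset.mem_erase] at hd hmT
    tauto

/-- `Yn`, high coefficients: cancellation. -/
lemma YnH_cancel (hn : 3 ≤ n) (hnS : n ∉ S) (hn1S : n - 1 ∉ S)
    (h : OmHs n i (insert (n - 1) (insert n S)) T) :
    (n ∉ T ∧ n - 1 ∉ T) ∧ i ≠ n ∧ i ≠ n - 1 ∧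
      OmHs n i S (insert (n - 1) (insert n T)) := by
  have hne1 : n ≠ n - 1 := by omega
  have hne2 : n - 1 ≠ n := by omega
  have hf1 : 1 ≤ n ∧ n ≤ n := by omega
  have hf2 : 1 ≤ n - 1 ∧ n - 1 ≤ n := by omega
  have hd : ∀ m, m ∈ insert (n - 1) (insert n S) → m ∉ T :=
    fun m hx => Finset.disjoint_left.1 h.2 hx
  have hnT : n ∉ T := hd n (by simp)
  have hn1T : n - 1 ∉ T := hd (n - 1) (by simp)
  have hin : i ≠ n := by
    intro hc
    have hu := Finset.ext_iff.1 h.1 n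
    simp only [Finset.mem_union, Finset.mem_insert, Finset.mem_sdiff, Finset.mem_Icc,
      Finset.mem_singleton] at hu
    tauto
  have hin1 : i ≠ n - 1 := by
    intro hc
    have hu := Finset.ext_iff.1 h.1 (n - 1)
    simp only [Finset.mem_union, Finset.mem_insert, Finset.mem_sdiff, Finset.mem_Icc,
      Finset.mem_singleton] at hu
    tauto
  refine ⟨⟨hnT, hn1T⟩, hin, hin1, ?_, ?_⟩
  · ext m
    have hu := Finset.ext_iff.1 h.1 m
    simp only [Finset.mem_union, Finset.mem_insert, Finset.mem_sdiff, Finset.mem_Icc,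
      Finset.mem_singleton] at hu
    simp only [Finset.mem_union, Finset.mem_insert, Finset.mem_sdiff, Finset.mem_Icc,
      Finset.mem_singleton]
    by_cases hmn : m = n <;> by_cases hmn1 : m = n - 1
    · omega
    · subst hmn; tauto
    · subst hmn1; tauto
    · tauto
  · rw [Finset.disjoint_left]
    intro m hmS hmT
    simp only [Finset.mem_insert] at hmT
    have := hd m (by simp [hmS])
    rcases hmT with rfl | rfl | hmT <;> tauto

/-- `Yn`, low coefficient at `i = n`, forward. -/
lemma YnL_n_fwd (hn : 3 ≤ n) (hnS : n ∉ S) (hn1S : n - 1 ∉ S)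
    (h : OmLs n n (insert (n - 1) (insert n S)) T) :
    OmHs n (n - 1) S T ∧ n ∈ T := by
  have hne1 : n ≠ n - 1 := by omega
  have hne2 : n - 1 ≠ n := by omega
  have hf1 : 1 ≤ n ∧ n ≤ n := by omega
  have hf2 : 1 ≤ n - 1 ∧ n - 1 ≤ n := by omega
  have hnT : n ∈ T := by
    have hi := Finset.ext_iff.1 h.2 n
    simp only [Finset.mem_inter, Finset.mem_insert, Finset.mem_singleton] at hi
    tauto
  have hn1T : n - 1 ∉ T := by
    intro hc
    have hi := Finset.ext_iff.1 h.2 (n - 1)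
    simp only [Finset.mem_inter, Finset.mem_insert, Finset.mem_singleton] at hi
    tauto
  refine ⟨⟨?_, ?_⟩, hnT⟩
  · ext m
    have hu := Finset.ext_iff.1 h.1 m
    simp only [Finset.mem_union, Finset.mem_insert, Finset.mem_Icc] at hu
    simp only [Finset.mem_union, Finset.mem_sdiff, Finset.mem_Icc, Finset.mem_singleton]
    by_cases hmn : m = n <;> by_cases hmn1 : m = n - 1
    · omega
    · subst hmn; tauto
    · subst hmn1; tauto
    · tauto
  · rw [Finset.disjoint_left]
    intro m hmS hmT
    have hi := Finset.ext_iff.1 h.2 m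
    simp only [Finset.mem_inter, Finset.mem_insert, Finset.mem_singleton] at hi
    have : m = n := by tauto
    subst this; tauto

/-- `Yn`, low coefficient at `i = n`, backward. -/
lemma YnL_n_bwd (hn : 3 ≤ n) (h : OmHs n (n - 1) S T) (hnT : n ∈ T) :
    (n ∉ S ∧ n - 1 ∉ S) ∧ OmLs n n (insert (n - 1) (insert n S)) T := by
  have hne1 : n ≠ n - 1 := by omega
  have hne2 : n - 1 ≠ n := by omega
  have hf1 : 1 ≤ n ∧ n ≤ n := by omega
  have hf2 : 1 ≤ n - 1 ∧ n - 1 ≤ n := by omega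
  have hnS : n ∉ S := fun hc => Finset.disjoint_left.1 h.2 hc hnT
  have hn1ST : n - 1 ∉ S ∧ n - 1 ∉ T := by
    have hu := Finset.ext_iff.1 h.1 (n - 1)
    simp only [Finset.mem_union, Finset.mem_sdiff, Finset.mem_Icc, Finset.mem_singleton]
      at hu
    tauto
  refine ⟨⟨hnS, hn1ST.1⟩, ?_, ?_⟩
  · ext m
    have hu := Finset.ext_iff.1 h.1 m
    simp only [Finset.mem_union, Finset.mem_sdiff, Finset.mem_Icc, Finset.mem_singleton]
      at hu
    simp only [Finset.mem_union, Finset.mem_insert, Finset.mem_Icc]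
    by_cases hmn : m = n <;> by_cases hmn1 : m = n - 1
    · omega
    · subst hmn; tauto
    · subst hmn1; tauto
    · tauto
  · ext m
    have hd : m ∈ S → m ∉ T := fun hx => Finset.disjoint_left.1 h.2 hx
    simp only [Finset.mem_inter, Finset.mem_insert, Finset.mem_singleton]
    by_cases hmn : m = n <;> by_cases hmn1 : m = n - 1
    · omega
    · subst hmn; tauto
    · subst hmn1; tauto
    · tauto

/-- `Yn`, low coefficient at `i = n - 1`, forward. -/
lemma YnL_n1_fwd (hn : 3 ≤ n) (hnS : n ∉ S) (hn1S : n - 1 ∉ S)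
    (h : OmLs n (n - 1) (insert (n - 1) (insert n S)) T) :
    OmHs n n S T ∧ n - 1 ∈ T := by
  have hne1 : n ≠ n - 1 := by omega
  have hne2 : n - 1 ≠ n := by omega
  have hf1 : 1 ≤ n ∧ n ≤ n := by omega
  have hf2 : 1 ≤ n - 1 ∧ n - 1 ≤ n := by omega
  have hn1T : n - 1 ∈ T := by
    have hi := Finset.ext_iff.1 h.2 (n - 1)
    simp only [Finset.mem_inter, Finset.mem_insert, Finset.mem_singleton] at hi
    tauto
  have hnT : n ∉ T := by
    intro hc
    have hi := Finset.ext_iff.1 h.2 n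
    simp only [Finset.mem_inter, Finset.mem_insert, Finset.mem_singleton] at hi
    tauto
  refine ⟨⟨?_, ?_⟩, hn1T⟩
  · ext m
    have hu := Finset.ext_iff.1 h.1 m
    simp only [Finset.mem_union, Finset.mem_insert, Finset.mem_Icc] at hu
    simp only [Finset.mem_union, Finset.mem_sdiff, Finset.mem_Icc, Finset.mem_singleton]
    by_cases hmn : m = n <;> by_cases hmn1 : m = n - 1
    · omega
    · subst hmn; tauto
    · subst hmn1; tauto
    · tauto
  · rw [Finset.disjoint_left]
    intro m hmS hmT
    have hi := Finset.ext_iff.1 h.2 m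
    simp only [Finset.mem_inter, Finset.mem_insert, Finset.mem_singleton] at hi
    have : m = n - 1 := by tauto
    subst this; tauto

/-- `Yn`, low coefficient at `i = n - 1`, backward. -/
lemma YnL_n1_bwd (hn : 3 ≤ n) (h : OmHs n n S T) (hn1T : n - 1 ∈ T) :
    (n ∉ S ∧ n - 1 ∉ S) ∧ OmLs n (n - 1) (insert (n - 1) (insert n S)) T := by
  have hne1 : n ≠ n - 1 := by omega
  have hne2 : n - 1 ≠ n := by omega
  have hf1 : 1 ≤ n ∧ n ≤ n := by omega
  have hf2 : 1 ≤ n - 1 ∧ n - 1 ≤ n := by omega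
  have hn1S : n - 1 ∉ S := fun hc => Finset.disjoint_left.1 h.2 hc hn1T
  have hnST : n ∉ S ∧ n ∉ T := by
    have hu := Finset.ext_iff.1 h.1 n
    simp only [Finset.mem_union, Finset.mem_sdiff, Finset.mem_Icc, Finset.mem_singleton]
      at hu
    tauto
  refine ⟨⟨hnST.1, hn1S⟩, ?_, ?_⟩
  · ext m
    have hu := Finset.ext_iff.1 h.1 m
    simp only [Finset.mem_union, Finset.mem_sdiff, Finset.mem_Icc, Finset.mem_singleton]
      at hu
    simp only [Finset.mem_union, Finset.mem_insert, Finset.mem_Icc]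
    by_cases hmn : m = n <;> by_cases hmn1 : m = n - 1
    · omega
    · subst hmn; tauto
    · subst hmn1; tauto
    · tauto
  · ext m
    have hd : m ∈ S → m ∉ T := fun hx => Finset.disjoint_left.1 h.2 hx
    simp only [Finset.mem_inter, Finset.mem_insert, Finset.mem_singleton]
    by_cases hmn : m = n <;> by_cases hmn1 : m = n - 1
    · omega
    · subst hmn; tauto
    · subst hmn1; tauto
    · tauto

/-- `Yn`, low coefficients: cancellation. -/
lemma YnL_cancel (hn : 3 ≤ n) (hnS : n ∉ S) (hn1S : n - 1 ∉ S) (hin : i ≠ n)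
    (hin1 : i ≠ n - 1) (h : OmLs n i (insert (n - 1) (insert n S)) T) :
    (n ∉ T ∧ n - 1 ∉ T) ∧ OmLs n i S (insert (n - 1) (insert n T)) := by
  have hne1 : n ≠ n - 1 := by omega
  have hne2 : n - 1 ≠ n := by omega
  have hf1 : 1 ≤ n ∧ n ≤ n := by omega
  have hf2 : 1 ≤ n - 1 ∧ n - 1 ≤ n := by omega
  have hnT : n ∉ T := by
    intro hc
    have hi := Finset.ext_iff.1 h.2 n
    simp only [Finset.mem_inter, Finset.mem_insert, Finset.mem_singleton] at hi
    tauto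
  have hn1T : n - 1 ∉ T := by
    intro hc
    have hi := Finset.ext_iff.1 h.2 (n - 1)
    simp only [Finset.mem_inter, Finset.mem_insert, Finset.mem_singleton] at hi
    tauto
  refine ⟨⟨hnT, hn1T⟩, ?_, ?_⟩
  · ext m
    have hu := Finset.ext_iff.1 h.1 m
    simp only [Finset.mem_union, Finset.mem_insert, Finset.mem_Icc] at hu
    simp only [Finset.mem_union, Finset.mem_insert, Finset.mem_Icc]
    by_cases hmn : m = n <;> by_cases hmn1 : m = n - 1
    · omega
    · subst hmn; tauto
    · subst hmn1; tauto
    · tauto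
  · ext m
    have hi := Finset.ext_iff.1 h.2 m
    simp only [Finset.mem_inter, Finset.mem_insert, Finset.mem_singleton] at hi
    simp only [Finset.mem_inter, Finset.mem_insert, Finset.mem_singleton]
    by_cases hmn : m = n <;> by_cases hmn1 : m = n - 1
    · omega
    · subst hmn; tauto
    · subst hmn1; tauto
    · tauto

end KnSetLemmas

/-! ### Part D3: pointwise coefficient identities, `k < n` -/

lemma CL_eq (n i : ℕ) (p : SIdx n × SIdx n) :
    CL n i p = if OmLs n i (p.1 : Finset ℕ) (p.2 : Finset ℕ) ∧ Odd (p.1 : Finset ℕ).card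
      then (-1 : ℂ) ^ (Ilow n i (p.1 : Finset ℕ)) else 0 := by
  unfold CL OmLs
  by_cases h1 : (p.1 : Finset ℕ) ∪ (p.2 : Finset ℕ) = Finset.Icc 1 n ∧
      (p.1 : Finset ℕ) ∩ (p.2 : Finset ℕ) = {i} ∧ Odd (p.1 : Finset ℕ).card
  · rw [if_pos h1, if_pos ⟨⟨h1.1, h1.2.1⟩, h1.2.2⟩]
  · rw [if_neg h1, if_neg (fun hc => h1 ⟨hc.1.1, hc.1.2, hc.2⟩)]

lemma CH_eq (n i : ℕ) (p : SIdx n × SIdx n) :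
    CH n i p = (-1 : ℂ) ^ i *
      (if OmHs n i (p.1 : Finset ℕ) (p.2 : Finset ℕ) ∧ Odd (p.1 : Finset ℕ).card
        then (-1 : ℂ) ^ (Ihigh n i (p.1 : Finset ℕ)) else 0) := by
  unfold CH OmHs
  by_cases h1 : (p.1 : Finset ℕ) ∪ (p.2 : Finset ℕ) = Finset.Icc 1 n \ {i} ∧
      Disjoint (p.1 : Finset ℕ) (p.2 : Finset ℕ) ∧ Odd (p.1 : Finset ℕ).card
  · rw [if_pos h1, if_pos ⟨⟨h1.1, h1.2.1⟩, h1.2.2⟩]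
  · rw [if_neg h1, if_neg (fun hc => h1 ⟨hc.1.1, hc.1.2, hc.2⟩)]

lemma sgn_add_one (a : ℤ) : (-1 : ℂ) ^ (a + 1) = -(-1 : ℂ) ^ a := by
  rw [zpow_add₀ (by norm_num : (-1 : ℂ) ≠ 0)]; simp

lemma sgn_sub_one (a : ℤ) : (-1 : ℂ) ^ (a - 1) = -(-1 : ℂ) ^ a := by
  rw [zpow_sub₀ (by norm_num : (-1 : ℂ) ≠ 0), zpow_one, div_neg, div_one]

lemma odd_of_eq_add_two {a b : ℕ} (h : a + 2 = b) : Odd a ↔ Odd b := by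
  rw [Nat.odd_iff, Nat.odd_iff]; omega

lemma PD_Xlow (n k i : ℕ) (hk1 : 1 ≤ k) (hkn : k < n)
    (h : k + 1 ∈ Finset.Icc 1 n) (p : SIdx n × SIdx n) :
    (if k ∈ (p.1 : Finset ℕ) ∧ k + 1 ∉ (p.1 : Finset ℕ) then (1 : ℂ) else 0)
        * CL n i (mvX n k h p.1, p.2)
      + (if k ∈ (p.2 : Finset ℕ) ∧ k + 1 ∉ (p.2 : Finset ℕ) then (1 : ℂ) else 0)
        * CL n i (p.1, mvX n k h p.2)
      = if i = k + 1 then CL n k p else 0 := by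
  obtain ⟨A, B⟩ := p
  have hab : k ≠ k + 1 := by omega
  have hkU : k ∈ Finset.Icc 1 n := by simp only [Finset.mem_Icc]; omega
  simp only [CL_eq, coe_mvX]
  rcases eq_or_ne i (k + 1) with rfl | hik1
  · rw [if_pos rfl]
    by_cases hT1 : k ∈ (A : Finset ℕ) ∧ k + 1 ∉ (A : Finset ℕ)
    · have hcard := card_hop k (k + 1) (A : Finset ℕ) hT1.1 hT1.2
      by_cases hC1 : OmLs n (k + 1) (insert (k + 1) ((A : Finset ℕ).erase k)) (B : Finset ℕ)
          ∧ Odd (insert (k + 1) ((A : Finset ℕ).erase k)).card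
      · obtain ⟨hR, hbT⟩ := SL1 hab hkU hT1.1 hT1.2 hC1.1
        have hT2 : ¬(k ∈ (B : Finset ℕ) ∧ k + 1 ∉ (B : Finset ℕ)) := fun hc => hc.2 hbT
        rw [if_pos hT1, if_pos hC1, if_neg hT2, zero_mul, add_zero, one_mul,
          if_pos ⟨hR, hcard ▸ hC1.2⟩]
        have hsgn : Ilow n (k + 1) (insert (k + 1) ((A : Finset ℕ).erase k))
            = Ilow n k (A : Finset ℕ) := by
          unfold Ilow
          rw [I1_hop n k (k + 1) (A : Finset ℕ) hT1.1 hT1.2]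
          have hf := filter_card_hop (k + 1) k (k + 1) (A : Finset ℕ) hT1.1 hT1.2
          rw [if_pos (by omega), if_neg (by omega)] at hf
          have hf2 := filter_lt_succ_card (A : Finset ℕ) k
          rw [if_pos hT1.1] at hf2
          push_cast
          omega
        rw [hsgn]
      · -- first term vanishes; show the others vanish too
        rw [if_pos hT1, if_neg hC1, mul_zero, zero_add]
        have hT2 : ∀ hT2 : k ∈ (B : Finset ℕ) ∧ k + 1 ∉ (B : Finset ℕ),
            ¬(OmLs n (k + 1) (A : Finset ℕ) (insert (k + 1) ((B : Finset ℕ).erase k))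
              ∧ Odd (A : Finset ℕ).card) := by
          intro hT2 hC2
          exact hT1.2 (SL1 hab hkU hT2.1 hT2.2 (OmLs_comm.1 hC2.1)).2
        have hRf : ¬(OmLs n k (A : Finset ℕ) (B : Finset ℕ) ∧ Odd (A : Finset ℕ).card) := by
          intro hRod
          rcases SL0 hRod.1 h (by omega) with ⟨hc, _⟩ | ⟨hbB, _⟩
          · exact hT1.2 hc
          · exact hC1 ⟨(SL2 hab hRod.1 hbB).2, hcard.symm ▸ hRod.2⟩
        rw [if_neg hRf]
        by_cases ht : k ∈ (B : Finset ℕ) ∧ k + 1 ∉ (B : Finset ℕ)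
        · rw [if_pos ht, if_neg (hT2 ht), mul_zero]
        · rw [if_neg ht, zero_mul]
    · rw [if_neg hT1, zero_mul, zero_add]
      by_cases hT2 : k ∈ (B : Finset ℕ) ∧ k + 1 ∉ (B : Finset ℕ)
      · by_cases hC2 : OmLs n (k + 1) (A : Finset ℕ)
            (insert (k + 1) ((B : Finset ℕ).erase k)) ∧ Odd (A : Finset ℕ).card
        · have h' := SL1 hab hkU hT2.1 hT2.2 (OmLs_comm.1 hC2.1)
          have hR : OmLs n k (A : Finset ℕ) (B : Finset ℕ) := OmLs_comm.1 h'.1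
          rw [if_pos hT2, if_pos hC2, one_mul, if_pos ⟨hR, hC2.2⟩]
          have hsgn : Ilow n (k + 1) (A : Finset ℕ) = Ilow n k (A : Finset ℕ) := by
            unfold Ilow
            have hf2 := filter_lt_succ_card (A : Finset ℕ) k
            rw [if_pos (OmLs_mem hR).1] at hf2
            push_cast
            omega
          rw [hsgn]
        · rw [if_pos hT2, if_neg hC2, mul_zero]
          have hRf : ¬(OmLs n k (A : Finset ℕ) (B : Finset ℕ)
              ∧ Odd (A : Finset ℕ).card) := by
            intro hRod
            rcases SL0 hRod.1 h (by omega) with ⟨hbA, _⟩ | ⟨hbB, _⟩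
            · exact hC2 ⟨OmLs_comm.1 (SL2 hab (OmLs_comm.1 hRod.1) hbA).2, hRod.2⟩
            · exact hT2.2 hbB
          rw [if_neg hRf]
      · rw [if_neg hT2, zero_mul]
        have hRf : ¬(OmLs n k (A : Finset ℕ) (B : Finset ℕ)
            ∧ Odd (A : Finset ℕ).card) := by
          intro hRod
          have hmem := OmLs_mem hRod.1
          rcases SL0 hRod.1 h (by omega) with ⟨hbA, hbB⟩ | ⟨hbB, hbA⟩
          · exact hT2 ⟨hmem.2, hbB⟩
          · exact hT1 ⟨hmem.1, hbA⟩
        rw [if_neg hRf]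
  · rw [if_neg hik1]
    by_cases hik : i = k
    · -- both terms impossible
      have hz1 : ∀ hT1 : k ∈ (A : Finset ℕ) ∧ k + 1 ∉ (A : Finset ℕ),
          ¬(OmLs n i (insert (k + 1) ((A : Finset ℕ).erase k)) (B : Finset ℕ)
            ∧ Odd (insert (k + 1) ((A : Finset ℕ).erase k)).card) :=
        fun _ hC1 => SL3 hab (hik ▸ hC1.1)
      have hz2 : ∀ hT2 : k ∈ (B : Finset ℕ) ∧ k + 1 ∉ (B : Finset ℕ),
          ¬(OmLs n i (A : Finset ℕ) (insert (k + 1) ((B : Finset ℕ).erase k))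
            ∧ Odd (A : Finset ℕ).card) :=
        fun _ hC2 => SL3 hab (OmLs_comm.1 (hik ▸ hC2.1))
      by_cases hT1 : k ∈ (A : Finset ℕ) ∧ k + 1 ∉ (A : Finset ℕ) <;>
        by_cases hT2 : k ∈ (B : Finset ℕ) ∧ k + 1 ∉ (B : Finset ℕ)
      · rw [if_pos hT1, if_pos hT2, if_neg (hz1 hT1), if_neg (hz2 hT2)]; ring
      · rw [if_pos hT1, if_neg hT2, if_neg (hz1 hT1)]; ring
      · rw [if_neg hT1, if_pos hT2, if_neg (hz2 hT2)]; ring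
      · rw [if_neg hT1, if_neg hT2]; ring
    · -- cancellation
      by_cases hT1 : k ∈ (A : Finset ℕ) ∧ k + 1 ∉ (A : Finset ℕ)
      · by_cases hC1 : OmLs n i (insert (k + 1) ((A : Finset ℕ).erase k)) (B : Finset ℕ)
            ∧ Odd (insert (k + 1) ((A : Finset ℕ).erase k)).card
        · obtain ⟨hT2, hC2s⟩ := SL4 hab hkU hik hik1 hT1.1 hT1.2 hC1.1
          have hcard := card_hop k (k + 1) (A : Finset ℕ) hT1.1 hT1.2
          rw [if_pos hT1, if_pos hT2, if_pos hC1, if_pos ⟨hC2s, hcard ▸ hC1.2⟩]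
          have hsgn : Ilow n i (insert (k + 1) ((A : Finset ℕ).erase k))
              = Ilow n i (A : Finset ℕ) + 1 := by
            unfold Ilow
            rw [I1_hop n k (k + 1) (A : Finset ℕ) hT1.1 hT1.2]
            have hf := filter_card_hop i k (k + 1) (A : Finset ℕ) hT1.1 hT1.2
            have hie : (if k < i then (1 : ℕ) else 0) = (if k + 1 < i then 1 else 0) := by
              split_ifs <;> omega
            rw [hie] at hf
            push_cast
            omega
          rw [hsgn, sgn_add_one]
          ring
        · rw [if_pos hT1, if_neg hC1, mul_zero, zero_add]
          have hz2 : ∀ hT2 : k ∈ (B : Finset ℕ) ∧ k + 1 ∉ (B : Finset ℕ),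
              ¬(OmLs n i (A : Finset ℕ) (insert (k + 1) ((B : Finset ℕ).erase k))
                ∧ Odd (A : Finset ℕ).card) := by
            intro hT2 hC2
            obtain ⟨_, hback⟩ := SL4 hab hkU hik hik1 hT2.1 hT2.2 (OmLs_comm.1 hC2.1)
            have hcard := card_hop k (k + 1) (A : Finset ℕ) hT1.1 hT1.2
            exact hC1 ⟨OmLs_comm.1 hback, hcard.symm ▸ hC2.2⟩
          by_cases ht : k ∈ (B : Finset ℕ) ∧ k + 1 ∉ (B : Finset ℕ)
          · rw [if_pos ht, if_neg (hz2 ht), mul_zero]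
          · rw [if_neg ht, zero_mul]
      · rw [if_neg hT1, zero_mul, zero_add]
        by_cases hT2 : k ∈ (B : Finset ℕ) ∧ k + 1 ∉ (B : Finset ℕ)
        · by_cases hC2 : OmLs n i (A : Finset ℕ) (insert (k + 1) ((B : Finset ℕ).erase k))
              ∧ Odd (A : Finset ℕ).card
          · exfalso
            obtain ⟨hfwd, _⟩ := SL4 hab hkU hik hik1 hT2.1 hT2.2 (OmLs_comm.1 hC2.1)
            exact hT1 hfwd
          · rw [if_pos hT2, if_neg hC2, mul_zero]
        · rw [if_neg hT2, zero_mul]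

lemma PD_Ylow (n k i : ℕ) (hk1 : 1 ≤ k) (hkn : k < n)
    (h : k ∈ Finset.Icc 1 n) (p : SIdx n × SIdx n) :
    (if k + 1 ∈ (p.1 : Finset ℕ) ∧ k ∉ (p.1 : Finset ℕ) then (1 : ℂ) else 0)
        * CL n i (mvY n k h p.1, p.2)
      + (if k + 1 ∈ (p.2 : Finset ℕ) ∧ k ∉ (p.2 : Finset ℕ) then (1 : ℂ) else 0)
        * CL n i (p.1, mvY n k h p.2)
      = if i = k then CL n (k + 1) p else 0 := by
  obtain ⟨A, B⟩ := p
  have hab : k + 1 ≠ k := by omega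
  have hk1U : k + 1 ∈ Finset.Icc 1 n := by simp only [Finset.mem_Icc]; omega
  simp only [CL_eq, coe_mvY]
  rcases eq_or_ne k i with rfl | hik'
  · rw [if_pos rfl]
    by_cases hT1 : k + 1 ∈ (A : Finset ℕ) ∧ k ∉ (A : Finset ℕ)
    · have hcard := card_hop (k + 1) k (A : Finset ℕ) hT1.1 hT1.2
      by_cases hC1 : OmLs n k (insert k ((A : Finset ℕ).erase (k + 1))) (B : Finset ℕ)
          ∧ Odd (insert k ((A : Finset ℕ).erase (k + 1))).card
      · obtain ⟨hR, hbT⟩ := SL1 hab hk1U hT1.1 hT1.2 hC1.1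
        have hT2 : ¬(k + 1 ∈ (B : Finset ℕ) ∧ k ∉ (B : Finset ℕ)) := fun hc => hc.2 hbT
        rw [if_pos hT1, if_pos hC1, if_neg hT2, zero_mul, add_zero, one_mul,
          if_pos ⟨hR, hcard ▸ hC1.2⟩]
        have hsgn : Ilow n k (insert k ((A : Finset ℕ).erase (k + 1)))
            = Ilow n (k + 1) (A : Finset ℕ) := by
          unfold Ilow
          rw [I1_hop n (k + 1) k (A : Finset ℕ) hT1.1 hT1.2]
          have hf := filter_card_hop k (k + 1) k (A : Finset ℕ) hT1.1 hT1.2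
          rw [if_neg (by omega), if_neg (by omega)] at hf
          have hf2 := filter_lt_succ_card (A : Finset ℕ) k
          rw [if_neg hT1.2] at hf2
          push_cast
          omega
        rw [hsgn]
      · rw [if_pos hT1, if_neg hC1, mul_zero, zero_add]
        have hT2k : ∀ hT2 : k + 1 ∈ (B : Finset ℕ) ∧ k ∉ (B : Finset ℕ),
            ¬(OmLs n k (A : Finset ℕ) (insert k ((B : Finset ℕ).erase (k + 1)))
              ∧ Odd (A : Finset ℕ).card) := by
          intro hT2 hC2
          exact hT1.2 (SL1 hab hk1U hT2.1 hT2.2 (OmLs_comm.1 hC2.1)).2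
        have hRf : ¬(OmLs n (k + 1) (A : Finset ℕ) (B : Finset ℕ)
            ∧ Odd (A : Finset ℕ).card) := by
          intro hRod
          rcases SL0 hRod.1 h (by omega) with ⟨hc, _⟩ | ⟨hbB, _⟩
          · exact hT1.2 hc
          · exact hC1 ⟨(SL2 hab hRod.1 hbB).2, hcard.symm ▸ hRod.2⟩
        rw [if_neg hRf]
        by_cases ht : k + 1 ∈ (B : Finset ℕ) ∧ k ∉ (B : Finset ℕ)
        · rw [if_pos ht, if_neg (hT2k ht), mul_zero]
        · rw [if_neg ht, zero_mul]
    · rw [if_neg hT1, zero_mul, zero_add]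
      by_cases hT2 : k + 1 ∈ (B : Finset ℕ) ∧ k ∉ (B : Finset ℕ)
      · by_cases hC2 : OmLs n k (A : Finset ℕ)
            (insert k ((B : Finset ℕ).erase (k + 1))) ∧ Odd (A : Finset ℕ).card
        · have h' := SL1 hab hk1U hT2.1 hT2.2 (OmLs_comm.1 hC2.1)
          have hR : OmLs n (k + 1) (A : Finset ℕ) (B : Finset ℕ) := OmLs_comm.1 h'.1
          rw [if_pos hT2, if_pos hC2, one_mul, if_pos ⟨hR, hC2.2⟩]
          have hsgn : Ilow n k (A : Finset ℕ) = Ilow n (k + 1) (A : Finset ℕ) := by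
            unfold Ilow
            have hf2 := filter_lt_succ_card (A : Finset ℕ) k
            rw [if_pos h'.2] at hf2
            push_cast
            omega
          rw [hsgn]
        · rw [if_pos hT2, if_neg hC2, mul_zero]
          have hRf : ¬(OmLs n (k + 1) (A : Finset ℕ) (B : Finset ℕ)
              ∧ Odd (A : Finset ℕ).card) := by
            intro hRod
            rcases SL0 hRod.1 h (by omega) with ⟨hbA, _⟩ | ⟨hbB, _⟩
            · exact hC2 ⟨OmLs_comm.1 (SL2 hab (OmLs_comm.1 hRod.1) hbA).2, hRod.2⟩
            · exact hT2.2 hbB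
          rw [if_neg hRf]
      · rw [if_neg hT2, zero_mul]
        have hRf : ¬(OmLs n (k + 1) (A : Finset ℕ) (B : Finset ℕ)
            ∧ Odd (A : Finset ℕ).card) := by
          intro hRod
          have hmem := OmLs_mem hRod.1
          rcases SL0 hRod.1 h (by omega) with ⟨hbA, hbB⟩ | ⟨hbB, hbA⟩
          · exact hT2 ⟨hmem.2, hbB⟩
          · exact hT1 ⟨hmem.1, hbA⟩
        rw [if_neg hRf]
  · have hik : i ≠ k := hik'.symm
    rw [if_neg hik]
    by_cases hik1 : i = k + 1
    · have hz1 : ∀ hT1 : k + 1 ∈ (A : Finset ℕ) ∧ k ∉ (A : Finset ℕ),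
          ¬(OmLs n i (insert k ((A : Finset ℕ).erase (k + 1))) (B : Finset ℕ)
            ∧ Odd (insert k ((A : Finset ℕ).erase (k + 1))).card) :=
        fun _ hC1 => SL3 hab (hik1 ▸ hC1.1)
      have hz2 : ∀ hT2 : k + 1 ∈ (B : Finset ℕ) ∧ k ∉ (B : Finset ℕ),
          ¬(OmLs n i (A : Finset ℕ) (insert k ((B : Finset ℕ).erase (k + 1)))
            ∧ Odd (A : Finset ℕ).card) :=
        fun _ hC2 => SL3 hab (OmLs_comm.1 (hik1 ▸ hC2.1))
      by_cases hT1 : k + 1 ∈ (A : Finset ℕ) ∧ k ∉ (A : Finset ℕ) <;>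
        by_cases hT2 : k + 1 ∈ (B : Finset ℕ) ∧ k ∉ (B : Finset ℕ)
      · rw [if_pos hT1, if_pos hT2, if_neg (hz1 hT1), if_neg (hz2 hT2)]; ring
      · rw [if_pos hT1, if_neg hT2, if_neg (hz1 hT1)]; ring
      · rw [if_neg hT1, if_pos hT2, if_neg (hz2 hT2)]; ring
      · rw [if_neg hT1, if_neg hT2]; ring
    · by_cases hT1 : k + 1 ∈ (A : Finset ℕ) ∧ k ∉ (A : Finset ℕ)
      · by_cases hC1 : OmLs n i (insert k ((A : Finset ℕ).erase (k + 1))) (B : Finset ℕ)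
            ∧ Odd (insert k ((A : Finset ℕ).erase (k + 1))).card
        · obtain ⟨hT2, hC2s⟩ := SL4 hab hk1U hik1 hik hT1.1 hT1.2 hC1.1
          have hcard := card_hop (k + 1) k (A : Finset ℕ) hT1.1 hT1.2
          rw [if_pos hT1, if_pos hT2, if_pos hC1, if_pos ⟨hC2s, hcard ▸ hC1.2⟩]
          have hsgn : Ilow n i (insert k ((A : Finset ℕ).erase (k + 1)))
              = Ilow n i (A : Finset ℕ) - 1 := by
            unfold Ilow
            rw [I1_hop n (k + 1) k (A : Finset ℕ) hT1.1 hT1.2]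
            have hf := filter_card_hop i (k + 1) k (A : Finset ℕ) hT1.1 hT1.2
            have hie : (if k + 1 < i then (1 : ℕ) else 0) = (if k < i then 1 else 0) := by
              split_ifs <;> omega
            rw [hie] at hf
            push_cast
            omega
          rw [hsgn, sgn_sub_one]
          ring
        · rw [if_pos hT1, if_neg hC1, mul_zero, zero_add]
          have hz2 : ∀ hT2 : k + 1 ∈ (B : Finset ℕ) ∧ k ∉ (B : Finset ℕ),
              ¬(OmLs n i (A : Finset ℕ) (insert k ((B : Finset ℕ).erase (k + 1)))
                ∧ Odd (A : Finset ℕ).card) := by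
            intro hT2 hC2
            obtain ⟨_, hback⟩ := SL4 hab hk1U hik1 hik hT2.1 hT2.2 (OmLs_comm.1 hC2.1)
            have hcard := card_hop (k + 1) k (A : Finset ℕ) hT1.1 hT1.2
            exact hC1 ⟨OmLs_comm.1 hback, hcard.symm ▸ hC2.2⟩
          by_cases ht : k + 1 ∈ (B : Finset ℕ) ∧ k ∉ (B : Finset ℕ)
          · rw [if_pos ht, if_neg (hz2 ht), mul_zero]
          · rw [if_neg ht, zero_mul]
      · rw [if_neg hT1, zero_mul, zero_add]
        by_cases hT2 : k + 1 ∈ (B : Finset ℕ) ∧ k ∉ (B : Finset ℕ)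
        · by_cases hC2 : OmLs n i (A : Finset ℕ)
              (insert k ((B : Finset ℕ).erase (k + 1))) ∧ Odd (A : Finset ℕ).card
          · exfalso
            obtain ⟨hfwd, _⟩ := SL4 hab hk1U hik1 hik hT2.1 hT2.2 (OmLs_comm.1 hC2.1)
            exact hT1 hfwd
          · rw [if_pos hT2, if_neg hC2, mul_zero]
        · rw [if_neg hT2, zero_mul]

lemma OmHs_not_mem {n b : ℕ} {S T : Finset ℕ} (h : OmHs n b S T) : b ∉ S ∧ b ∉ T := by
  have hu := Finset.ext_iff.1 h.1 b
  simp only [Finset.mem_union, Finset.mem_sdiff, Finset.mem_singleton] at hu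
  tauto

lemma PD_Xhigh (n k i : ℕ) (hk1 : 1 ≤ k) (hkn : k < n)
    (h : k + 1 ∈ Finset.Icc 1 n) (p : SIdx n × SIdx n) :
    (if k ∈ (p.1 : Finset ℕ) ∧ k + 1 ∉ (p.1 : Finset ℕ) then (1 : ℂ) else 0)
        * CH n i (mvX n k h p.1, p.2)
      + (if k ∈ (p.2 : Finset ℕ) ∧ k + 1 ∉ (p.2 : Finset ℕ) then (1 : ℂ) else 0)
        * CH n i (p.1, mvX n k h p.2)
      = if i = k then -CH n (k + 1) p else 0 := by
  obtain ⟨A, B⟩ := p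
  have hab : k ≠ k + 1 := by omega
  have hkU : k ∈ Finset.Icc 1 n := by simp only [Finset.mem_Icc]; omega
  simp only [CH_eq, coe_mvX]
  rcases eq_or_ne k i with rfl | hik'
  · rw [if_pos rfl]
    by_cases hT1 : k ∈ (A : Finset ℕ) ∧ k + 1 ∉ (A : Finset ℕ)
    · have hcard := card_hop k (k + 1) (A : Finset ℕ) hT1.1 hT1.2
      by_cases hC1 : OmHs n k (insert (k + 1) ((A : Finset ℕ).erase k)) (B : Finset ℕ)
          ∧ Odd (insert (k + 1) ((A : Finset ℕ).erase k)).card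
      · obtain ⟨hR, hkB⟩ := HL1 hab hkU hT1.1 hT1.2 hC1.1
        have hT2f : ¬(k ∈ (B : Finset ℕ) ∧ k + 1 ∉ (B : Finset ℕ)) := fun hc => hkB hc.1
        rw [if_pos hT1, if_pos hC1, if_neg hT2f, zero_mul, add_zero, one_mul,
          if_pos ⟨hR, hcard ▸ hC1.2⟩]
        have hsgn : Ihigh n k (insert (k + 1) ((A : Finset ℕ).erase k))
            = Ihigh n (k + 1) (A : Finset ℕ) := by
          unfold Ihigh
          rw [I1_hop n k (k + 1) (A : Finset ℕ) hT1.1 hT1.2]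
          have hf := filter_card_hop k k (k + 1) (A : Finset ℕ) hT1.1 hT1.2
          rw [if_neg (by omega), if_neg (by omega)] at hf
          have hf2 := filter_lt_succ_card (A : Finset ℕ) k
          rw [if_pos hT1.1] at hf2
          push_cast
          omega
        rw [hsgn, pow_succ]
        ring
      · rw [if_pos hT1, if_neg hC1]
        have hT2k : ∀ _ : k ∈ (B : Finset ℕ) ∧ k + 1 ∉ (B : Finset ℕ),
            ¬(OmHs n k (A : Finset ℕ) (insert (k + 1) ((B : Finset ℕ).erase k))
              ∧ Odd (A : Finset ℕ).card) := by
          intro hT2 hC2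
          exact (HL1 hab hkU hT2.1 hT2.2 (OmHs_comm.1 hC2.1)).2 hT1.1
        have hRf : ¬(OmHs n (k + 1) (A : Finset ℕ) (B : Finset ℕ)
            ∧ Odd (A : Finset ℕ).card) := by
          intro hRod
          rcases HL0 hRod.1 hkU (by omega) with ⟨hkA, _⟩ | ⟨_, hkA⟩
          · exact hC1 ⟨(HL2 hab hkU h hRod.1 hkA).2, hcard.symm ▸ hRod.2⟩
          · exact hkA hT1.1
        rw [if_neg hRf]
        by_cases ht : k ∈ (B : Finset ℕ) ∧ k + 1 ∉ (B : Finset ℕ)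
        · rw [if_pos ht, if_neg (hT2k ht)]; ring
        · rw [if_neg ht]; ring
    · rw [if_neg hT1, zero_mul, zero_add]
      by_cases hT2 : k ∈ (B : Finset ℕ) ∧ k + 1 ∉ (B : Finset ℕ)
      · by_cases hC2 : OmHs n k (A : Finset ℕ) (insert (k + 1) ((B : Finset ℕ).erase k))
            ∧ Odd (A : Finset ℕ).card
        · have h' := HL1 hab hkU hT2.1 hT2.2 (OmHs_comm.1 hC2.1)
          have hR : OmHs n (k + 1) (A : Finset ℕ) (B : Finset ℕ) := OmHs_comm.1 h'.1
          rw [if_pos hT2, if_pos hC2, one_mul, if_pos ⟨hR, hC2.2⟩]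
          have hsgn : Ihigh n k (A : Finset ℕ) = Ihigh n (k + 1) (A : Finset ℕ) := by
            unfold Ihigh
            have hf2 := filter_lt_succ_card (A : Finset ℕ) k
            rw [if_neg h'.2] at hf2
            push_cast
            omega
          rw [hsgn, pow_succ]
          ring
        · rw [if_pos hT2, if_neg hC2]
          have hRf : ¬(OmHs n (k + 1) (A : Finset ℕ) (B : Finset ℕ)
              ∧ Odd (A : Finset ℕ).card) := by
            intro hRod
            have hnm := OmHs_not_mem hRod.1
            rcases HL0 hRod.1 hkU (by omega) with ⟨hkA, _⟩ | ⟨hkB, _⟩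
            · exact hT1 ⟨hkA, hnm.1⟩
            · exact hC2 ⟨OmHs_comm.1 (HL2 hab hkU h (OmHs_comm.1 hRod.1) hkB).2, hRod.2⟩
          rw [if_neg hRf]
          ring
      · rw [if_neg hT2, zero_mul]
        have hRf : ¬(OmHs n (k + 1) (A : Finset ℕ) (B : Finset ℕ)
            ∧ Odd (A : Finset ℕ).card) := by
          intro hRod
          have hnm := OmHs_not_mem hRod.1
          rcases HL0 hRod.1 hkU (by omega) with ⟨hkA, _⟩ | ⟨hkB, _⟩
          · exact hT1 ⟨hkA, hnm.1⟩
          · exact hT2 ⟨hkB, hnm.2⟩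
        rw [if_neg hRf]
        ring
  · have hik : i ≠ k := fun hc => hik' hc.symm
    rw [if_neg hik]
    by_cases hik1 : i = k + 1
    · have hz1 : ∀ _ : k ∈ (A : Finset ℕ) ∧ k + 1 ∉ (A : Finset ℕ),
          ¬(OmHs n i (insert (k + 1) ((A : Finset ℕ).erase k)) (B : Finset ℕ)
            ∧ Odd (insert (k + 1) ((A : Finset ℕ).erase k)).card) :=
        fun _ hC1 => HL4 (hik1 ▸ hC1.1)
      have hz2 : ∀ _ : k ∈ (B : Finset ℕ) ∧ k + 1 ∉ (B : Finset ℕ),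
          ¬(OmHs n i (A : Finset ℕ) (insert (k + 1) ((B : Finset ℕ).erase k))
            ∧ Odd (A : Finset ℕ).card) :=
        fun _ hC2 => HL4 (hik1 ▸ (OmHs_comm.1 hC2.1))
      by_cases hT1 : k ∈ (A : Finset ℕ) ∧ k + 1 ∉ (A : Finset ℕ) <;>
        by_cases hT2 : k ∈ (B : Finset ℕ) ∧ k + 1 ∉ (B : Finset ℕ)
      · rw [if_pos hT1, if_pos hT2, if_neg (hz1 hT1), if_neg (hz2 hT2)]; ring
      · rw [if_pos hT1, if_neg hT2, if_neg (hz1 hT1)]; ring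
      · rw [if_neg hT1, if_pos hT2, if_neg (hz2 hT2)]; ring
      · rw [if_neg hT1, if_neg hT2]; ring
    · by_cases hT1 : k ∈ (A : Finset ℕ) ∧ k + 1 ∉ (A : Finset ℕ)
      · by_cases hC1 : OmHs n i (insert (k + 1) ((A : Finset ℕ).erase k)) (B : Finset ℕ)
            ∧ Odd (insert (k + 1) ((A : Finset ℕ).erase k)).card
        · obtain ⟨hT2, hC2s⟩ := HL3 hab hkU hik hik1 hT1.1 hT1.2 hC1.1
          have hcard := card_hop k (k + 1) (A : Finset ℕ) hT1.1 hT1.2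
          rw [if_pos hT1, if_pos hT2, if_pos hC1, if_pos ⟨hC2s, hcard ▸ hC1.2⟩]
          have hsgn : Ihigh n i (insert (k + 1) ((A : Finset ℕ).erase k))
              = Ihigh n i (A : Finset ℕ) + 1 := by
            unfold Ihigh
            rw [I1_hop n k (k + 1) (A : Finset ℕ) hT1.1 hT1.2]
            have hf := filter_card_hop i k (k + 1) (A : Finset ℕ) hT1.1 hT1.2
            have hie : (if k < i then (1 : ℕ) else 0) = (if k + 1 < i then 1 else 0) := by
              split_ifs <;> omega
            rw [hie] at hf
            push_cast
            omega
          rw [hsgn, sgn_add_one]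
          ring
        · rw [if_pos hT1, if_neg hC1]
          have hz2 : ∀ _ : k ∈ (B : Finset ℕ) ∧ k + 1 ∉ (B : Finset ℕ),
              ¬(OmHs n i (A : Finset ℕ) (insert (k + 1) ((B : Finset ℕ).erase k))
                ∧ Odd (A : Finset ℕ).card) := by
            intro hT2 hC2
            obtain ⟨_, hback⟩ := HL3 hab hkU hik hik1 hT2.1 hT2.2 (OmHs_comm.1 hC2.1)
            have hcard := card_hop k (k + 1) (A : Finset ℕ) hT1.1 hT1.2
            exact hC1 ⟨OmHs_comm.1 hback, hcard.symm ▸ hC2.2⟩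
          by_cases ht : k ∈ (B : Finset ℕ) ∧ k + 1 ∉ (B : Finset ℕ)
          · rw [if_pos ht, if_neg (hz2 ht)]; ring
          · rw [if_neg ht]; ring
      · rw [if_neg hT1, zero_mul, zero_add]
        by_cases hT2 : k ∈ (B : Finset ℕ) ∧ k + 1 ∉ (B : Finset ℕ)
        · by_cases hC2 : OmHs n i (A : Finset ℕ) (insert (k + 1) ((B : Finset ℕ).erase k))
              ∧ Odd (A : Finset ℕ).card
          · exfalso
            obtain ⟨hfwd, _⟩ := HL3 hab hkU hik hik1 hT2.1 hT2.2 (OmHs_comm.1 hC2.1)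
            exact hT1 hfwd
          · rw [if_pos hT2, if_neg hC2]; ring
        · rw [if_neg hT2]; ring

lemma PD_Yhigh (n k i : ℕ) (hk1 : 1 ≤ k) (hkn : k < n)
    (h : k ∈ Finset.Icc 1 n) (p : SIdx n × SIdx n) :
    (if k + 1 ∈ (p.1 : Finset ℕ) ∧ k ∉ (p.1 : Finset ℕ) then (1 : ℂ) else 0)
        * CH n i (mvY n k h p.1, p.2)
      + (if k + 1 ∈ (p.2 : Finset ℕ) ∧ k ∉ (p.2 : Finset ℕ) then (1 : ℂ) else 0)
        * CH n i (p.1, mvY n k h p.2)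
      = if i = k + 1 then -CH n k p else 0 := by
  obtain ⟨A, B⟩ := p
  have hab : k + 1 ≠ k := by omega
  have hk1U : k + 1 ∈ Finset.Icc 1 n := by simp only [Finset.mem_Icc]; omega
  simp only [CH_eq, coe_mvY]
  rcases eq_or_ne i (k + 1) with rfl | hik1
  · rw [if_pos rfl]
    by_cases hT1 : k + 1 ∈ (A : Finset ℕ) ∧ k ∉ (A : Finset ℕ)
    · have hcard := card_hop (k + 1) k (A : Finset ℕ) hT1.1 hT1.2
      by_cases hC1 : OmHs n (k + 1) (insert k ((A : Finset ℕ).erase (k + 1))) (B : Finset ℕ)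
          ∧ Odd (insert k ((A : Finset ℕ).erase (k + 1))).card
      · obtain ⟨hR, hkB⟩ := HL1 hab hk1U hT1.1 hT1.2 hC1.1
        have hT2f : ¬(k + 1 ∈ (B : Finset ℕ) ∧ k ∉ (B : Finset ℕ)) := fun hc => hkB hc.1
        rw [if_pos hT1, if_pos hC1, if_neg hT2f, zero_mul, add_zero, one_mul,
          if_pos ⟨hR, hcard ▸ hC1.2⟩]
        have hsgn : Ihigh n (k + 1) (insert k ((A : Finset ℕ).erase (k + 1)))
            = Ihigh n k (A : Finset ℕ) := by
          unfold Ihigh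
          rw [I1_hop n (k + 1) k (A : Finset ℕ) hT1.1 hT1.2]
          have hf := filter_card_hop (k + 1) (k + 1) k (A : Finset ℕ) hT1.1 hT1.2
          rw [if_neg (by omega), if_pos (by omega)] at hf
          have hf2 := filter_lt_succ_card (A : Finset ℕ) k
          rw [if_neg hT1.2] at hf2
          push_cast
          omega
        rw [hsgn, pow_succ]
        ring
      · rw [if_pos hT1, if_neg hC1]
        have hT2k : ∀ _ : k + 1 ∈ (B : Finset ℕ) ∧ k ∉ (B : Finset ℕ),
            ¬(OmHs n (k + 1) (A : Finset ℕ) (insert k ((B : Finset ℕ).erase (k + 1)))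
              ∧ Odd (A : Finset ℕ).card) := by
          intro hT2 hC2
          exact (HL1 hab hk1U hT2.1 hT2.2 (OmHs_comm.1 hC2.1)).2 hT1.1
        have hRf : ¬(OmHs n k (A : Finset ℕ) (B : Finset ℕ)
            ∧ Odd (A : Finset ℕ).card) := by
          intro hRod
          rcases HL0 hRod.1 hk1U (by omega) with ⟨hkA, _⟩ | ⟨_, hkA⟩
          · exact hC1 ⟨(HL2 hab hk1U h hRod.1 hkA).2, hcard.symm ▸ hRod.2⟩
          · exact hkA hT1.1
        rw [if_neg hRf]
        by_cases ht : k + 1 ∈ (B : Finset ℕ) ∧ k ∉ (B : Finset ℕ)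
        · rw [if_pos ht, if_neg (hT2k ht)]; ring
        · rw [if_neg ht]; ring
    · rw [if_neg hT1, zero_mul, zero_add]
      by_cases hT2 : k + 1 ∈ (B : Finset ℕ) ∧ k ∉ (B : Finset ℕ)
      · by_cases hC2 : OmHs n (k + 1) (A : Finset ℕ)
            (insert k ((B : Finset ℕ).erase (k + 1))) ∧ Odd (A : Finset ℕ).card
        · have h' := HL1 hab hk1U hT2.1 hT2.2 (OmHs_comm.1 hC2.1)
          have hR : OmHs n k (A : Finset ℕ) (B : Finset ℕ) := OmHs_comm.1 h'.1
          rw [if_pos hT2, if_pos hC2, one_mul, if_pos ⟨hR, hC2.2⟩]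
          have hkA : k ∉ (A : Finset ℕ) := (OmHs_not_mem hR).1
          have hsgn : Ihigh n (k + 1) (A : Finset ℕ) = Ihigh n k (A : Finset ℕ) := by
            unfold Ihigh
            have hf2 := filter_lt_succ_card (A : Finset ℕ) k
            rw [if_neg hkA] at hf2
            push_cast
            omega
          rw [hsgn, pow_succ]
          ring
        · rw [if_pos hT2, if_neg hC2]
          have hRf : ¬(OmHs n k (A : Finset ℕ) (B : Finset ℕ)
              ∧ Odd (A : Finset ℕ).card) := by
            intro hRod
            have hnm := OmHs_not_mem hRod.1
            rcases HL0 hRod.1 hk1U (by omega) with ⟨hkA, _⟩ | ⟨hkB, _⟩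
            · exact hT1 ⟨hkA, hnm.1⟩
            · exact hC2 ⟨OmHs_comm.1 (HL2 hab hk1U h (OmHs_comm.1 hRod.1) hkB).2, hRod.2⟩
          rw [if_neg hRf]
          ring
      · rw [if_neg hT2, zero_mul]
        have hRf : ¬(OmHs n k (A : Finset ℕ) (B : Finset ℕ)
            ∧ Odd (A : Finset ℕ).card) := by
          intro hRod
          have hnm := OmHs_not_mem hRod.1
          rcases HL0 hRod.1 hk1U (by omega) with ⟨hkA, _⟩ | ⟨hkB, _⟩
          · exact hT1 ⟨hkA, hnm.1⟩
          · exact hT2 ⟨hkB, hnm.2⟩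
        rw [if_neg hRf]
        ring
  · rw [if_neg hik1]
    by_cases hik : i = k
    · have hz1 : ∀ _ : k + 1 ∈ (A : Finset ℕ) ∧ k ∉ (A : Finset ℕ),
          ¬(OmHs n i (insert k ((A : Finset ℕ).erase (k + 1))) (B : Finset ℕ)
            ∧ Odd (insert k ((A : Finset ℕ).erase (k + 1))).card) :=
        fun _ hC1 => HL4 (hik ▸ hC1.1)
      have hz2 : ∀ _ : k + 1 ∈ (B : Finset ℕ) ∧ k ∉ (B : Finset ℕ),
          ¬(OmHs n i (A : Finset ℕ) (insert k ((B : Finset ℕ).erase (k + 1)))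
            ∧ Odd (A : Finset ℕ).card) :=
        fun _ hC2 => HL4 (hik ▸ (OmHs_comm.1 hC2.1))
      by_cases hT1 : k + 1 ∈ (A : Finset ℕ) ∧ k ∉ (A : Finset ℕ) <;>
        by_cases hT2 : k + 1 ∈ (B : Finset ℕ) ∧ k ∉ (B : Finset ℕ)
      · rw [if_pos hT1, if_pos hT2, if_neg (hz1 hT1), if_neg (hz2 hT2)]; ring
      · rw [if_pos hT1, if_neg hT2, if_neg (hz1 hT1)]; ring
      · rw [if_neg hT1, if_pos hT2, if_neg (hz2 hT2)]; ring
      · rw [if_neg hT1, if_neg hT2]; ring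
    · by_cases hT1 : k + 1 ∈ (A : Finset ℕ) ∧ k ∉ (A : Finset ℕ)
      · by_cases hC1 : OmHs n i (insert k ((A : Finset ℕ).erase (k + 1))) (B : Finset ℕ)
            ∧ Odd (insert k ((A : Finset ℕ).erase (k + 1))).card
        · obtain ⟨hT2, hC2s⟩ := HL3 hab hk1U hik1 hik hT1.1 hT1.2 hC1.1
          have hcard := card_hop (k + 1) k (A : Finset ℕ) hT1.1 hT1.2
          rw [if_pos hT1, if_pos hT2, if_pos hC1, if_pos ⟨hC2s, hcard ▸ hC1.2⟩]
          have hsgn : Ihigh n i (insert k ((A : Finset ℕ).erase (k + 1)))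
              = Ihigh n i (A : Finset ℕ) - 1 := by
            unfold Ihigh
            rw [I1_hop n (k + 1) k (A : Finset ℕ) hT1.1 hT1.2]
            have hf := filter_card_hop i (k + 1) k (A : Finset ℕ) hT1.1 hT1.2
            have hie : (if k + 1 < i then (1 : ℕ) else 0) = (if k < i then 1 else 0) := by
              split_ifs <;> omega
            rw [hie] at hf
            push_cast
            omega
          rw [hsgn, sgn_sub_one]
          ring
        · rw [if_pos hT1, if_neg hC1]
          have hz2 : ∀ _ : k + 1 ∈ (B : Finset ℕ) ∧ k ∉ (B : Finset ℕ),
              ¬(OmHs n i (A : Finset ℕ) (insert k ((B : Finset ℕ).erase (k + 1)))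
                ∧ Odd (A : Finset ℕ).card) := by
            intro hT2 hC2
            obtain ⟨_, hback⟩ := HL3 hab hk1U hik1 hik hT2.1 hT2.2 (OmHs_comm.1 hC2.1)
            have hcard := card_hop (k + 1) k (A : Finset ℕ) hT1.1 hT1.2
            exact hC1 ⟨OmHs_comm.1 hback, hcard.symm ▸ hC2.2⟩
          by_cases ht : k + 1 ∈ (B : Finset ℕ) ∧ k ∉ (B : Finset ℕ)
          · rw [if_pos ht, if_neg (hz2 ht)]; ring
          · rw [if_neg ht]; ring
      · rw [if_neg hT1, zero_mul, zero_add]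
        by_cases hT2 : k + 1 ∈ (B : Finset ℕ) ∧ k ∉ (B : Finset ℕ)
        · by_cases hC2 : OmHs n i (A : Finset ℕ)
              (insert k ((B : Finset ℕ).erase (k + 1))) ∧ Odd (A : Finset ℕ).card
          · exfalso
            obtain ⟨hfwd, _⟩ := HL3 hab hk1U hik1 hik hT2.1 hT2.2 (OmHs_comm.1 hC2.1)
            exact hT1 hfwd
          · rw [if_pos hT2, if_neg hC2]; ring
        · rw [if_neg hT2]; ring

lemma filter_erase2 (n i : ℕ) (A : Finset ℕ) (h1 : ¬ n < i) (h2 : ¬ n - 1 < i) :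
    ((A.erase n).erase (n - 1)).filter (fun m => m < i) = A.filter (fun m => m < i) := by
  have e1 : n ∉ A.filter (fun m => m < i) := fun hc => h1 (Finset.mem_filter.1 hc).2
  have e2 : n - 1 ∉ (A.filter (fun m => m < i)).erase n :=
    fun hc => h2 (Finset.mem_filter.1 (Finset.mem_of_mem_erase hc)).2
  rw [Finset.filter_erase, Finset.filter_erase, Finset.erase_eq_of_notMem e2,
    Finset.erase_eq_of_notMem e1]

lemma filter_insert2 (n i : ℕ) (A : Finset ℕ) (h1 : ¬ n < i) (h2 : ¬ n - 1 < i) :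
    (insert (n - 1) (insert n A)).filter (fun m => m < i) = A.filter (fun m => m < i) := by
  rw [Finset.filter_insert, if_neg h2, Finset.filter_insert, if_neg h1]

lemma PD_XnLow (n i : ℕ) (hn : 3 ≤ n) (hi : i ≤ n) (p : SIdx n × SIdx n) :
    (if n ∈ (p.1 : Finset ℕ) ∧ n - 1 ∈ (p.1 : Finset ℕ) then (-1 : ℂ) else 0)
        * CL n i (mvXn n p.1, p.2)
      + (if n ∈ (p.2 : Finset ℕ) ∧ n - 1 ∈ (p.2 : Finset ℕ) then (-1 : ℂ) else 0)
        * CL n i (p.1, mvXn n p.2)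
      = 0 := by
  obtain ⟨A, B⟩ := p
  have hA := subset_U A
  simp only [CL_eq, coe_mvXn]
  by_cases hT1 : n ∈ (A : Finset ℕ) ∧ n - 1 ∈ (A : Finset ℕ)
  · have hcard := card_erase2 n (A : Finset ℕ) hT1.1 hT1.2 hn
    by_cases hC1 : OmLs n i (((A : Finset ℕ).erase n).erase (n - 1)) (B : Finset ℕ)
        ∧ Odd (((A : Finset ℕ).erase n).erase (n - 1)).card
    · obtain ⟨⟨hnT, hn1T⟩, hin, hin1, hC2s⟩ := XnL_cancel hn hT1.1 hT1.2 hC1.1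
      have hodd : Odd (A : Finset ℕ).card := (odd_of_eq_add_two hcard).1 hC1.2
      rw [if_pos hT1, if_pos hC1, if_pos ⟨hnT, hn1T⟩, if_pos ⟨hC2s, hodd⟩]
      have hsgn : Ilow n i (((A : Finset ℕ).erase n).erase (n - 1))
          = Ilow n i (A : Finset ℕ) + 1 := by
        unfold Ilow
        rw [I1_erase2 n hn (A : Finset ℕ) hT1.1 hT1.2,
          filter_erase2 n i (A : Finset ℕ) (by omega) (by omega)]
        push_cast
        omega
      rw [hsgn, sgn_add_one]
      ring
    · rw [if_pos hT1, if_neg hC1]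
      by_cases ht : n ∈ (B : Finset ℕ) ∧ n - 1 ∈ (B : Finset ℕ)
      · by_cases hc2 : OmLs n i (A : Finset ℕ) (((B : Finset ℕ).erase n).erase (n - 1))
            ∧ Odd (A : Finset ℕ).card
        · exfalso
          obtain ⟨_, _, _, hback⟩ := XnL_cancel hn ht.1 ht.2 (OmLs_comm.1 hc2.1)
          exact hC1 ⟨OmLs_comm.1 hback, (odd_of_eq_add_two hcard).2 hc2.2⟩
        · rw [if_pos ht, if_neg hc2]; ring
      · rw [if_neg ht]; ring
  · rw [if_neg hT1]
    by_cases hT2 : n ∈ (B : Finset ℕ) ∧ n - 1 ∈ (B : Finset ℕ)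
    · by_cases hc2 : OmLs n i (A : Finset ℕ) (((B : Finset ℕ).erase n).erase (n - 1))
          ∧ Odd (A : Finset ℕ).card
      · exfalso
        obtain ⟨hAm, _, _, _⟩ := XnL_cancel hn hT2.1 hT2.2 (OmLs_comm.1 hc2.1)
        exact hT1 hAm
      · rw [if_pos hT2, if_neg hc2]; ring
    · rw [if_neg hT2]; ring

lemma PD_YnHigh (n i : ℕ) (hn : 3 ≤ n) (hi : i ≤ n)
    (h1 : n - 1 ∈ Finset.Icc 1 n) (h2 : n ∈ Finset.Icc 1 n) (p : SIdx n × SIdx n) :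
    (if n ∉ (p.1 : Finset ℕ) ∧ n - 1 ∉ (p.1 : Finset ℕ) then (1 : ℂ) else 0)
        * CH n i (mvYn n h1 h2 p.1, p.2)
      + (if n ∉ (p.2 : Finset ℕ) ∧ n - 1 ∉ (p.2 : Finset ℕ) then (1 : ℂ) else 0)
        * CH n i (p.1, mvYn n h1 h2 p.2)
      = 0 := by
  obtain ⟨A, B⟩ := p
  simp only [CH_eq, coe_mvYn]
  by_cases hT1 : n ∉ (A : Finset ℕ) ∧ n - 1 ∉ (A : Finset ℕ)
  · have hcard := card_insert2 n (A : Finset ℕ) hT1.1 hT1.2 hn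
    by_cases hC1 : OmHs n i (insert (n - 1) (insert n (A : Finset ℕ))) (B : Finset ℕ)
        ∧ Odd (insert (n - 1) (insert n (A : Finset ℕ))).card
    · obtain ⟨⟨hnT, hn1T⟩, hin, hin1, hC2s⟩ := YnH_cancel hn hT1.1 hT1.2 hC1.1
      have hodd : Odd (A : Finset ℕ).card :=
        (odd_of_eq_add_two hcard.symm).2 hC1.2
      rw [if_pos hT1, if_pos hC1, if_pos ⟨hnT, hn1T⟩, if_pos ⟨hC2s, hodd⟩]
      have hsgn : Ihigh n i (insert (n - 1) (insert n (A : Finset ℕ)))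
          = Ihigh n i (A : Finset ℕ) - 1 := by
        unfold Ihigh
        rw [I1_insert2 n hn (A : Finset ℕ) hT1.1 hT1.2,
          filter_insert2 n i (A : Finset ℕ) (by omega) (by omega)]
        push_cast
        omega
      rw [hsgn, sgn_sub_one]
      ring
    · rw [if_pos hT1, if_neg hC1]
      by_cases ht : n ∉ (B : Finset ℕ) ∧ n - 1 ∉ (B : Finset ℕ)
      · by_cases hc2 : OmHs n i (A : Finset ℕ) (insert (n - 1) (insert n (B : Finset ℕ)))
            ∧ Odd (A : Finset ℕ).card
        · exfalso
          obtain ⟨_, _, _, hback⟩ := YnH_cancel hn ht.1 ht.2 (OmHs_comm.1 hc2.1)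
          exact hC1 ⟨OmHs_comm.1 hback, (odd_of_eq_add_two hcard.symm).1 hc2.2⟩
        · rw [if_pos ht, if_neg hc2]; ring
      · rw [if_neg ht]; ring
  · rw [if_neg hT1]
    by_cases hT2 : n ∉ (B : Finset ℕ) ∧ n - 1 ∉ (B : Finset ℕ)
    · by_cases hc2 : OmHs n i (A : Finset ℕ) (insert (n - 1) (insert n (B : Finset ℕ)))
          ∧ Odd (A : Finset ℕ).card
      · exfalso
        obtain ⟨hAm, _, _, _⟩ := YnH_cancel hn hT2.1 hT2.2 (OmHs_comm.1 hc2.1)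
        exact hT1 hAm
      · rw [if_pos hT2, if_neg hc2]; ring
    · rw [if_neg hT2]; ring

section CountHelpers

variable {n : ℕ} {S : Finset ℕ}

lemma flt_n_mem (hsub : S ⊆ Finset.Icc 1 n) (hx : n ∈ S) :
    (S.filter (fun m => m < n)).card + 1 = S.card := by
  have he : S.filter (fun m => m < n) = S.erase n := by
    ext m
    simp only [Finset.mem_filter, Finset.mem_erase]
    constructor
    · rintro ⟨hm, hlt⟩; exact ⟨by omega, hm⟩
    · rintro ⟨hne, hm⟩
      have := (Finset.mem_Icc.1 (hsub hm)).2
      exact ⟨hm, by omega⟩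
  rw [he, Finset.card_erase_of_mem hx]
  have : 1 ≤ S.card := Finset.card_pos.2 ⟨n, hx⟩
  omega

lemma flt_n_not (hsub : S ⊆ Finset.Icc 1 n) (hx : n ∉ S) :
    S.filter (fun m => m < n) = S := by
  apply Finset.filter_true_of_mem
  intro m hm
  have := (Finset.mem_Icc.1 (hsub hm)).2
  have : m ≠ n := fun hc => hx (hc ▸ hm)
  omega

lemma flt_n1_both (hsub : S ⊆ Finset.Icc 1 n) (hx : n ∈ S) (hy : n - 1 ∈ S) (hn : 3 ≤ n) :
    (S.filter (fun m => m < n - 1)).card + 2 = S.card := by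
  have he : S.filter (fun m => m < n - 1) = (S.erase n).erase (n - 1) := by
    ext m
    simp only [Finset.mem_filter, Finset.mem_erase]
    constructor
    · rintro ⟨hm, hlt⟩; exact ⟨by omega, by omega, hm⟩
    · rintro ⟨h1, h2, hm⟩
      have := (Finset.mem_Icc.1 (hsub hm)).2
      exact ⟨hm, by omega⟩
  rw [he]
  exact card_erase2 n S hx hy hn

lemma flt_n1_one (hsub : S ⊆ Finset.Icc 1 n) (hx : n ∉ S) (hy : n - 1 ∈ S) (hn : 3 ≤ n) :
    (S.filter (fun m => m < n - 1)).card + 1 = S.card := by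
  have he : S.filter (fun m => m < n - 1) = S.erase (n - 1) := by
    ext m
    simp only [Finset.mem_filter, Finset.mem_erase]
    constructor
    · rintro ⟨hm, hlt⟩; exact ⟨by omega, hm⟩
    · rintro ⟨h1, hm⟩
      have := (Finset.mem_Icc.1 (hsub hm)).2
      have : m ≠ n := fun hc => hx (hc ▸ hm)
      exact ⟨hm, by omega⟩
  rw [he, Finset.card_erase_of_mem hy]
  have : 1 ≤ S.card := Finset.card_pos.2 ⟨n - 1, hy⟩
  omega

lemma flt_n1_mixed (hsub : S ⊆ Finset.Icc 1 n) (hx : n ∈ S) (hy : n - 1 ∉ S) (hn : 3 ≤ n) :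
    (S.filter (fun m => m < n - 1)).card + 1 = S.card := by
  have he : S.filter (fun m => m < n - 1) = S.erase n := by
    ext m
    simp only [Finset.mem_filter, Finset.mem_erase]
    constructor
    · rintro ⟨hm, hlt⟩; exact ⟨by omega, hm⟩
    · rintro ⟨h1, hm⟩
      have := (Finset.mem_Icc.1 (hsub hm)).2
      have : m ≠ n - 1 := fun hc => hy (hc ▸ hm)
      exact ⟨hm, by omega⟩
  rw [he, Finset.card_erase_of_mem hx]
  have : 1 ≤ S.card := Finset.card_pos.2 ⟨n, hx⟩
  omega

lemma flt_n1_none (hsub : S ⊆ Finset.Icc 1 n) (hx : n ∉ S) (hy : n - 1 ∉ S) (hn : 3 ≤ n) :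
    S.filter (fun m => m < n - 1) = S := by
  apply Finset.filter_true_of_mem
  intro m hm
  have := (Finset.mem_Icc.1 (hsub hm)).2
  have : m ≠ n := fun hc => hx (hc ▸ hm)
  have : m ≠ n - 1 := fun hc => hy (hc ▸ hm)
  omega

lemma erase2_subset {n : ℕ} {S : Finset ℕ} (hsub : S ⊆ Finset.Icc 1 n) :
    (S.erase n).erase (n - 1) ⊆ Finset.Icc 1 n :=
  ((Finset.erase_subset _ _).trans (Finset.erase_subset _ _)).trans hsub

end CountHelpers

lemma PD_XnHigh (n i : ℕ) (hn : 3 ≤ n) (hoddn : Odd n) (hi : i ≤ n) (p : SIdx n × SIdx n) :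
    (if n ∈ (p.1 : Finset ℕ) ∧ n - 1 ∈ (p.1 : Finset ℕ) then (-1 : ℂ) else 0)
        * CH n i (mvXn n p.1, p.2)
      + (if n ∈ (p.2 : Finset ℕ) ∧ n - 1 ∈ (p.2 : Finset ℕ) then (-1 : ℂ) else 0)
        * CH n i (p.1, mvXn n p.2)
      = if i = n then CL n (n - 1) p else if i = n - 1 then -CL n n p else 0 := by
  obtain ⟨A, B⟩ := p
  have hA := subset_U A
  have hB := subset_U B
  have hnIcc : n ∈ Finset.Icc 1 n := by simp only [Finset.mem_Icc]; omega
  have hn1Icc : n - 1 ∈ Finset.Icc 1 n := by simp only [Finset.mem_Icc]; omega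
  have hneg : (-1 : ℂ) ^ n = -1 := hoddn.neg_one_pow
  have heven : (-1 : ℂ) ^ (n - 1) = 1 := (Nat.Odd.sub_odd hoddn odd_one).neg_one_pow
  simp only [CL_eq, CH_eq, coe_mvXn]
  rcases eq_or_ne n i with rfl | hin'
  · rw [if_pos rfl]
    by_cases hT1 : n ∈ (A : Finset ℕ) ∧ n - 1 ∈ (A : Finset ℕ)
    · have hcard := card_erase2 n (A : Finset ℕ) hT1.1 hT1.2 hn
      by_cases hC1 : OmHs n n (((A : Finset ℕ).erase n).erase (n - 1)) (B : Finset ℕ)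
          ∧ Odd (((A : Finset ℕ).erase n).erase (n - 1)).card
      · obtain ⟨hR, hnB⟩ := XnH_n_fwd hn hT1.1 hT1.2 hC1.1
        have hodd' : Odd (A : Finset ℕ).card := (odd_of_eq_add_two hcard).1 hC1.2
        have hT2f : ¬(n ∈ (B : Finset ℕ) ∧ n - 1 ∈ (B : Finset ℕ)) := fun hc => hnB hc.1
        rw [if_pos hT1, if_pos hC1, if_neg hT2f, zero_mul, add_zero, if_pos ⟨hR, hodd'⟩]
        have hsgn : Ihigh n n (((A : Finset ℕ).erase n).erase (n - 1))
            = Ilow n (n - 1) (A : Finset ℕ) := by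
          unfold Ihigh Ilow
          rw [I1_erase2 n hn (A : Finset ℕ) hT1.1 hT1.2,
            flt_n_not (erase2_subset hA) (by simp)]
          have e2 := flt_n1_both hA hT1.1 hT1.2 hn
          push_cast
          omega
        rw [hsgn, hneg]
        ring
      · rw [if_pos hT1, if_neg hC1]
        have hRf : ¬(OmLs n (n - 1) (A : Finset ℕ) (B : Finset ℕ)
            ∧ Odd (A : Finset ℕ).card) := by
          intro hRod
          rcases SL0 hRod.1 hnIcc (by omega) with ⟨hnA, _⟩ | ⟨_, hnA⟩
          · exact hC1 ⟨(XnH_n_bwd hn hRod.1 hnA).2, (odd_of_eq_add_two hcard).2 hRod.2⟩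
          · exact hnA hT1.1
        rw [if_neg hRf]
        by_cases ht : n ∈ (B : Finset ℕ) ∧ n - 1 ∈ (B : Finset ℕ)
        · by_cases hc2 : OmHs n n (A : Finset ℕ) (((B : Finset ℕ).erase n).erase (n - 1))
              ∧ Odd (A : Finset ℕ).card
          · exact absurd hT1.1 (XnH_n_fwd hn ht.1 ht.2 (OmHs_comm.1 hc2.1)).2
          · rw [if_pos ht, if_neg hc2]; ring
        · rw [if_neg ht]; ring
    · rw [if_neg hT1, zero_mul, zero_add]
      by_cases hT2 : n ∈ (B : Finset ℕ) ∧ n - 1 ∈ (B : Finset ℕ)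
      · by_cases hc2 : OmHs n n (A : Finset ℕ) (((B : Finset ℕ).erase n).erase (n - 1))
            ∧ Odd (A : Finset ℕ).card
        · have h' := XnH_n_fwd hn hT2.1 hT2.2 (OmHs_comm.1 hc2.1)
          have hR := OmLs_comm.1 h'.1
          rw [if_pos hT2, if_pos hc2, if_pos ⟨hR, hc2.2⟩]
          have hn1A : n - 1 ∈ (A : Finset ℕ) := (OmLs_mem hR).1
          have hsgn : Ihigh n n (A : Finset ℕ) = Ilow n (n - 1) (A : Finset ℕ) := by
            unfold Ihigh Ilow
            rw [flt_n_not hA h'.2]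
            have e2 := flt_n1_one hA h'.2 hn1A hn
            push_cast
            omega
          rw [hsgn, hneg]
          ring
        · rw [if_pos hT2, if_neg hc2]
          have hRf : ¬(OmLs n (n - 1) (A : Finset ℕ) (B : Finset ℕ)
              ∧ Odd (A : Finset ℕ).card) := by
            intro hRod
            rcases SL0 hRod.1 hnIcc (by omega) with ⟨hnA, _⟩ | ⟨hnB, _⟩
            · exact hT1 ⟨hnA, (XnH_n_bwd hn hRod.1 hnA).1.1⟩
            · exact hc2 ⟨OmHs_comm.1 (XnH_n_bwd hn (OmLs_comm.1 hRod.1) hnB).2, hRod.2⟩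
          rw [if_neg hRf]
          ring
      · rw [if_neg hT2]
        have hRf : ¬(OmLs n (n - 1) (A : Finset ℕ) (B : Finset ℕ)
            ∧ Odd (A : Finset ℕ).card) := by
          intro hRod
          rcases SL0 hRod.1 hnIcc (by omega) with ⟨hnA, _⟩ | ⟨hnB, _⟩
          · exact hT1 ⟨hnA, (XnH_n_bwd hn hRod.1 hnA).1.1⟩
          · exact hT2 ⟨hnB, (XnH_n_bwd hn (OmLs_comm.1 hRod.1) hnB).1.1⟩
        rw [if_neg hRf]
        ring
  · have hin : i ≠ n := hin'.symm
    rw [if_neg hin]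
    rcases eq_or_ne i (n - 1) with rfl | hin1
    · rw [if_pos rfl]
      by_cases hT1 : n ∈ (A : Finset ℕ) ∧ n - 1 ∈ (A : Finset ℕ)
      · have hcard := card_erase2 n (A : Finset ℕ) hT1.1 hT1.2 hn
        by_cases hC1 : OmHs n (n - 1) (((A : Finset ℕ).erase n).erase (n - 1)) (B : Finset ℕ)
            ∧ Odd (((A : Finset ℕ).erase n).erase (n - 1)).card
        · obtain ⟨hR, hn1B⟩ := XnH_n1_fwd hn hT1.1 hT1.2 hC1.1
          have hodd' : Odd (A : Finset ℕ).card := (odd_of_eq_add_two hcard).1 hC1.2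
          have hT2f : ¬(n ∈ (B : Finset ℕ) ∧ n - 1 ∈ (B : Finset ℕ)) := fun hc => hn1B hc.2
          rw [if_pos hT1, if_pos hC1, if_neg hT2f, zero_mul, add_zero, if_pos ⟨hR, hodd'⟩]
          have hsgn : Ihigh n (n - 1) (((A : Finset ℕ).erase n).erase (n - 1))
              = Ilow n n (A : Finset ℕ) := by
            unfold Ihigh Ilow
            rw [I1_erase2 n hn (A : Finset ℕ) hT1.1 hT1.2,
              flt_n1_none (erase2_subset hA) (by simp) (by simp) hn]
            have e2 := flt_n_mem hA hT1.1
            have e3 := card_erase2 n (A : Finset ℕ) hT1.1 hT1.2 hn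
            push_cast
            omega
          rw [hsgn, heven]
          ring
        · rw [if_pos hT1, if_neg hC1]
          have hRf : ¬(OmLs n n (A : Finset ℕ) (B : Finset ℕ)
              ∧ Odd (A : Finset ℕ).card) := by
            intro hRod
            rcases SL0 hRod.1 hn1Icc (by omega) with ⟨hn1A, _⟩ | ⟨_, hn1A⟩
            · exact hC1 ⟨(XnH_n1_bwd hn hRod.1 hn1A).2, (odd_of_eq_add_two hcard).2 hRod.2⟩
            · exact hn1A hT1.2
          rw [if_neg hRf]
          by_cases ht : n ∈ (B : Finset ℕ) ∧ n - 1 ∈ (B : Finset ℕ)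
          · by_cases hc2 : OmHs n (n - 1) (A : Finset ℕ)
                (((B : Finset ℕ).erase n).erase (n - 1)) ∧ Odd (A : Finset ℕ).card
            · exact absurd hT1.2 (XnH_n1_fwd hn ht.1 ht.2 (OmHs_comm.1 hc2.1)).2
            · rw [if_pos ht, if_neg hc2]; ring
          · rw [if_neg ht]; ring
      · rw [if_neg hT1, zero_mul, zero_add]
        by_cases hT2 : n ∈ (B : Finset ℕ) ∧ n - 1 ∈ (B : Finset ℕ)
        · by_cases hc2 : OmHs n (n - 1) (A : Finset ℕ)
              (((B : Finset ℕ).erase n).erase (n - 1)) ∧ Odd (A : Finset ℕ).card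
          · have h' := XnH_n1_fwd hn hT2.1 hT2.2 (OmHs_comm.1 hc2.1)
            have hR := OmLs_comm.1 h'.1
            rw [if_pos hT2, if_pos hc2, if_pos ⟨hR, hc2.2⟩]
            have hnA : n ∈ (A : Finset ℕ) := (OmLs_mem hR).1
            have hsgn : Ihigh n (n - 1) (A : Finset ℕ) = Ilow n n (A : Finset ℕ) := by
              unfold Ihigh Ilow
              have e1 := flt_n1_mixed hA hnA h'.2 hn
              have e2 := flt_n_mem hA hnA
              push_cast
              omega
            rw [hsgn, heven]
            ring
          · rw [if_pos hT2, if_neg hc2]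
            have hRf : ¬(OmLs n n (A : Finset ℕ) (B : Finset ℕ)
                ∧ Odd (A : Finset ℕ).card) := by
              intro hRod
              rcases SL0 hRod.1 hn1Icc (by omega) with ⟨hn1A, _⟩ | ⟨hn1B, _⟩
              · exact hT1 ⟨(XnH_n1_bwd hn hRod.1 hn1A).1.1, hn1A⟩
              · exact hc2 ⟨OmHs_comm.1 (XnH_n1_bwd hn (OmLs_comm.1 hRod.1) hn1B).2, hRod.2⟩
            rw [if_neg hRf]
            ring
        · rw [if_neg hT2]
          have hRf : ¬(OmLs n n (A : Finset ℕ) (B : Finset ℕ)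
              ∧ Odd (A : Finset ℕ).card) := by
            intro hRod
            rcases SL0 hRod.1 hn1Icc (by omega) with ⟨hn1A, _⟩ | ⟨hn1B, _⟩
            · exact hT1 ⟨(XnH_n1_bwd hn hRod.1 hn1A).1.1, hn1A⟩
            · exact hT2 ⟨(XnH_n1_bwd hn (OmLs_comm.1 hRod.1) hn1B).1.1, hn1B⟩
          rw [if_neg hRf]
          ring
    · rw [if_neg hin1]
      by_cases hT1 : n ∈ (A : Finset ℕ) ∧ n - 1 ∈ (A : Finset ℕ)
      · have hcard := card_erase2 n (A : Finset ℕ) hT1.1 hT1.2 hn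
        by_cases hC1 : OmHs n i (((A : Finset ℕ).erase n).erase (n - 1)) (B : Finset ℕ)
            ∧ Odd (((A : Finset ℕ).erase n).erase (n - 1)).card
        · obtain ⟨hT2, hC2s⟩ := XnH_cancel hn hT1.1 hT1.2 hin hin1 hC1.1
          have hodd' : Odd (A : Finset ℕ).card := (odd_of_eq_add_two hcard).1 hC1.2
          rw [if_pos hT1, if_pos hC1, if_pos hT2, if_pos ⟨hC2s, hodd'⟩]
          have hsgn : Ihigh n i (((A : Finset ℕ).erase n).erase (n - 1))
              = Ihigh n i (A : Finset ℕ) + 1 := by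
            unfold Ihigh
            rw [I1_erase2 n hn (A : Finset ℕ) hT1.1 hT1.2,
              filter_erase2 n i (A : Finset ℕ) (by omega) (by omega)]
            push_cast
            omega
          rw [hsgn, sgn_add_one]
          ring
        · rw [if_pos hT1, if_neg hC1]
          by_cases ht : n ∈ (B : Finset ℕ) ∧ n - 1 ∈ (B : Finset ℕ)
          · by_cases hc2 : OmHs n i (A : Finset ℕ) (((B : Finset ℕ).erase n).erase (n - 1))
                ∧ Odd (A : Finset ℕ).card
            · exfalso
              obtain ⟨_, hback⟩ := XnH_cancel hn ht.1 ht.2 hin hin1 (OmHs_comm.1 hc2.1)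
              exact hC1 ⟨OmHs_comm.1 hback, (odd_of_eq_add_two hcard).2 hc2.2⟩
            · rw [if_pos ht, if_neg hc2]; ring
          · rw [if_neg ht]; ring
      · rw [if_neg hT1, zero_mul, zero_add]
        by_cases hT2 : n ∈ (B : Finset ℕ) ∧ n - 1 ∈ (B : Finset ℕ)
        · by_cases hc2 : OmHs n i (A : Finset ℕ) (((B : Finset ℕ).erase n).erase (n - 1))
              ∧ Odd (A : Finset ℕ).card
          · exfalso
            obtain ⟨hfwd, _⟩ := XnH_cancel hn hT2.1 hT2.2 hin hin1 (OmHs_comm.1 hc2.1)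
            exact hT1 hfwd
          · rw [if_pos hT2, if_neg hc2]; ring
        · rw [if_neg hT2]; ring

lemma PD_YnLow (n i : ℕ) (hn : 3 ≤ n) (hoddn : Odd n) (hi : i ≤ n)
    (h1 : n - 1 ∈ Finset.Icc 1 n) (h2 : n ∈ Finset.Icc 1 n) (p : SIdx n × SIdx n) :
    (if n ∉ (p.1 : Finset ℕ) ∧ n - 1 ∉ (p.1 : Finset ℕ) then (1 : ℂ) else 0)
        * CL n i (mvYn n h1 h2 p.1, p.2)
      + (if n ∉ (p.2 : Finset ℕ) ∧ n - 1 ∉ (p.2 : Finset ℕ) then (1 : ℂ) else 0)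
        * CL n i (p.1, mvYn n h1 h2 p.2)
      = if i = n then CH n (n - 1) p else if i = n - 1 then -CH n n p else 0 := by
  obtain ⟨A, B⟩ := p
  have hA := subset_U A
  have hB := subset_U B
  have hneg : (-1 : ℂ) ^ n = -1 := hoddn.neg_one_pow
  have heven : (-1 : ℂ) ^ (n - 1) = 1 := (Nat.Odd.sub_odd hoddn odd_one).neg_one_pow
  simp only [CL_eq, CH_eq, coe_mvYn]
  rcases eq_or_ne n i with rfl | hin'
  · rw [if_pos rfl]
    by_cases hT1 : n ∉ (A : Finset ℕ) ∧ n - 1 ∉ (A : Finset ℕ)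
    · have hcard := card_insert2 n (A : Finset ℕ) hT1.1 hT1.2 hn
      by_cases hC1 : OmLs n n (insert (n - 1) (insert n (A : Finset ℕ))) (B : Finset ℕ)
          ∧ Odd (insert (n - 1) (insert n (A : Finset ℕ))).card
      · obtain ⟨hR, hnB⟩ := YnL_n_fwd hn hT1.1 hT1.2 hC1.1
        have hodd' : Odd (A : Finset ℕ).card := (odd_of_eq_add_two hcard.symm).2 hC1.2
        have hT2f : ¬(n ∉ (B : Finset ℕ) ∧ n - 1 ∉ (B : Finset ℕ)) := fun hc => hc.1 hnB
        rw [if_pos hT1, if_pos hC1, if_neg hT2f, zero_mul, add_zero, if_pos ⟨hR, hodd'⟩]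
        have hsgn : Ilow n n (insert (n - 1) (insert n (A : Finset ℕ)))
            = Ihigh n (n - 1) (A : Finset ℕ) := by
          unfold Ilow Ihigh
          have e1 : (insert (n - 1) (insert n (A : Finset ℕ))).filter (fun m => m < n)
              = insert (n - 1) (A : Finset ℕ) := by
            rw [Finset.filter_insert, if_pos (by omega), Finset.filter_insert,
              if_neg (lt_irrefl n), flt_n_not hA hT1.1]
          rw [I1_insert2 n hn (A : Finset ℕ) hT1.1 hT1.2, e1,
            Finset.card_insert_of_notMem hT1.2, flt_n1_none hA hT1.1 hT1.2 hn]
          push_cast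
          omega
        rw [hsgn, heven]
      · rw [if_pos hT1, if_neg hC1]
        have hRf : ¬(OmHs n (n - 1) (A : Finset ℕ) (B : Finset ℕ)
            ∧ Odd (A : Finset ℕ).card) := by
          intro hRod
          rcases HL0 hRod.1 h2 (by omega) with ⟨hnA, _⟩ | ⟨hnB, _⟩
          · exact hT1.1 hnA
          · exact hC1 ⟨(YnL_n_bwd hn hRod.1 hnB).2, (odd_of_eq_add_two hcard.symm).1 hRod.2⟩
        rw [if_neg hRf]
        by_cases ht : n ∉ (B : Finset ℕ) ∧ n - 1 ∉ (B : Finset ℕ)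
        · by_cases hc2 : OmLs n n (A : Finset ℕ) (insert (n - 1) (insert n (B : Finset ℕ)))
              ∧ Odd (A : Finset ℕ).card
          · exact absurd (YnL_n_fwd hn ht.1 ht.2 (OmLs_comm.1 hc2.1)).2 hT1.1
          · rw [if_pos ht, if_neg hc2]; ring
        · rw [if_neg ht]; ring
    · rw [if_neg hT1, zero_mul, zero_add]
      by_cases hT2 : n ∉ (B : Finset ℕ) ∧ n - 1 ∉ (B : Finset ℕ)
      · by_cases hc2 : OmLs n n (A : Finset ℕ) (insert (n - 1) (insert n (B : Finset ℕ)))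
            ∧ Odd (A : Finset ℕ).card
        · have h' := YnL_n_fwd hn hT2.1 hT2.2 (OmLs_comm.1 hc2.1)
          have hR := OmHs_comm.1 h'.1
          rw [if_pos hT2, if_pos hc2, if_pos ⟨hR, hc2.2⟩]
          have hnA : n ∈ (A : Finset ℕ) := h'.2
          have hn1A : n - 1 ∉ (A : Finset ℕ) := (OmHs_not_mem hR).1
          have hsgn : Ilow n n (A : Finset ℕ) = Ihigh n (n - 1) (A : Finset ℕ) := by
            unfold Ilow Ihigh
            have e1 := flt_n_mem hA hnA
            have e2 := flt_n1_mixed hA hnA hn1A hn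
            push_cast
            omega
          rw [hsgn, heven]
        · rw [if_pos hT2, if_neg hc2]
          have hRf : ¬(OmHs n (n - 1) (A : Finset ℕ) (B : Finset ℕ)
              ∧ Odd (A : Finset ℕ).card) := by
            intro hRod
            rcases HL0 hRod.1 h2 (by omega) with ⟨hnA, _⟩ | ⟨hnB, _⟩
            · exact hc2 ⟨OmLs_comm.1 (YnL_n_bwd hn (OmHs_comm.1 hRod.1) hnA).2, hRod.2⟩
            · exact hT1 (YnL_n_bwd hn hRod.1 hnB).1
          rw [if_neg hRf]
          ring
      · rw [if_neg hT2, zero_mul]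
        have hRf : ¬(OmHs n (n - 1) (A : Finset ℕ) (B : Finset ℕ)
            ∧ Odd (A : Finset ℕ).card) := by
          intro hRod
          rcases HL0 hRod.1 h2 (by omega) with ⟨hnA, _⟩ | ⟨hnB, _⟩
          · exact hT2 (YnL_n_bwd hn (OmHs_comm.1 hRod.1) hnA).1
          · exact hT1 (YnL_n_bwd hn hRod.1 hnB).1
        rw [if_neg hRf]
        ring
  · have hin : i ≠ n := hin'.symm
    rw [if_neg hin]
    rcases eq_or_ne i (n - 1) with rfl | hin1
    · rw [if_pos rfl]
      by_cases hT1 : n ∉ (A : Finset ℕ) ∧ n - 1 ∉ (A : Finset ℕ)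
      · have hcard := card_insert2 n (A : Finset ℕ) hT1.1 hT1.2 hn
        by_cases hC1 : OmLs n (n - 1) (insert (n - 1) (insert n (A : Finset ℕ)))
            (B : Finset ℕ) ∧ Odd (insert (n - 1) (insert n (A : Finset ℕ))).card
        · obtain ⟨hR, hn1B⟩ := YnL_n1_fwd hn hT1.1 hT1.2 hC1.1
          have hodd' : Odd (A : Finset ℕ).card := (odd_of_eq_add_two hcard.symm).2 hC1.2
          have hT2f : ¬(n ∉ (B : Finset ℕ) ∧ n - 1 ∉ (B : Finset ℕ)) := fun hc => hc.2 hn1B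
          rw [if_pos hT1, if_pos hC1, if_neg hT2f, zero_mul, add_zero, if_pos ⟨hR, hodd'⟩]
          have hsgn : Ilow n (n - 1) (insert (n - 1) (insert n (A : Finset ℕ)))
              = Ihigh n n (A : Finset ℕ) := by
            unfold Ilow Ihigh
            rw [I1_insert2 n hn (A : Finset ℕ) hT1.1 hT1.2,
              filter_insert2 n (n - 1) (A : Finset ℕ) (by omega) (by omega),
              flt_n1_none hA hT1.1 hT1.2 hn, flt_n_not hA hT1.1]
            push_cast
            omega
          rw [hsgn, hneg]
          ring
        · rw [if_pos hT1, if_neg hC1]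
          have hRf : ¬(OmHs n n (A : Finset ℕ) (B : Finset ℕ)
              ∧ Odd (A : Finset ℕ).card) := by
            intro hRod
            rcases HL0 hRod.1 h1 (by omega) with ⟨hn1A, _⟩ | ⟨hn1B, _⟩
            · exact hT1.2 hn1A
            · exact hC1 ⟨(YnL_n1_bwd hn hRod.1 hn1B).2,
                (odd_of_eq_add_two hcard.symm).1 hRod.2⟩
          rw [if_neg hRf]
          by_cases ht : n ∉ (B : Finset ℕ) ∧ n - 1 ∉ (B : Finset ℕ)
          · by_cases hc2 : OmLs n (n - 1) (A : Finset ℕ)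
                (insert (n - 1) (insert n (B : Finset ℕ))) ∧ Odd (A : Finset ℕ).card
            · exact absurd (YnL_n1_fwd hn ht.1 ht.2 (OmLs_comm.1 hc2.1)).2 hT1.2
            · rw [if_pos ht, if_neg hc2]; ring
          · rw [if_neg ht]; ring
      · rw [if_neg hT1, zero_mul, zero_add]
        by_cases hT2 : n ∉ (B : Finset ℕ) ∧ n - 1 ∉ (B : Finset ℕ)
        · by_cases hc2 : OmLs n (n - 1) (A : Finset ℕ)
              (insert (n - 1) (insert n (B : Finset ℕ))) ∧ Odd (A : Finset ℕ).card
          · have h' := YnL_n1_fwd hn hT2.1 hT2.2 (OmLs_comm.1 hc2.1)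
            have hR := OmHs_comm.1 h'.1
            rw [if_pos hT2, if_pos hc2, if_pos ⟨hR, hc2.2⟩]
            have hn1A : n - 1 ∈ (A : Finset ℕ) := h'.2
            have hnA : n ∉ (A : Finset ℕ) := (OmHs_not_mem hR).1
            have hsgn : Ilow n (n - 1) (A : Finset ℕ) = Ihigh n n (A : Finset ℕ) := by
              unfold Ilow Ihigh
              have e1 := flt_n1_one hA hnA hn1A hn
              rw [flt_n_not hA hnA]
              push_cast
              omega
            rw [hsgn, hneg]
            ring
          · rw [if_pos hT2, if_neg hc2]
            have hRf : ¬(OmHs n n (A : Finset ℕ) (B : Finset ℕ)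
                ∧ Odd (A : Finset ℕ).card) := by
              intro hRod
              rcases HL0 hRod.1 h1 (by omega) with ⟨hn1A, _⟩ | ⟨hn1B, _⟩
              · exact hc2 ⟨OmLs_comm.1 (YnL_n1_bwd hn (OmHs_comm.1 hRod.1) hn1A).2, hRod.2⟩
              · exact hT1 (YnL_n1_bwd hn hRod.1 hn1B).1
            rw [if_neg hRf]
            ring
        · rw [if_neg hT2, zero_mul]
          have hRf : ¬(OmHs n n (A : Finset ℕ) (B : Finset ℕ)
              ∧ Odd (A : Finset ℕ).card) := by
            intro hRod
            rcases HL0 hRod.1 h1 (by omega) with ⟨hn1A, _⟩ | ⟨hn1B, _⟩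
            · exact hT2 (YnL_n1_bwd hn (OmHs_comm.1 hRod.1) hn1A).1
            · exact hT1 (YnL_n1_bwd hn hRod.1 hn1B).1
          rw [if_neg hRf]
          ring
    · rw [if_neg hin1]
      by_cases hT1 : n ∉ (A : Finset ℕ) ∧ n - 1 ∉ (A : Finset ℕ)
      · have hcard := card_insert2 n (A : Finset ℕ) hT1.1 hT1.2 hn
        by_cases hC1 : OmLs n i (insert (n - 1) (insert n (A : Finset ℕ))) (B : Finset ℕ)
            ∧ Odd (insert (n - 1) (insert n (A : Finset ℕ))).card
        · obtain ⟨hT2, hC2s⟩ := YnL_cancel hn hT1.1 hT1.2 hin hin1 hC1.1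
          have hodd' : Odd (A : Finset ℕ).card := (odd_of_eq_add_two hcard.symm).2 hC1.2
          rw [if_pos hT1, if_pos hC1, if_pos hT2, if_pos ⟨hC2s, hodd'⟩]
          have hsgn : Ilow n i (insert (n - 1) (insert n (A : Finset ℕ)))
              = Ilow n i (A : Finset ℕ) - 1 := by
            unfold Ilow
            rw [I1_insert2 n hn (A : Finset ℕ) hT1.1 hT1.2,
              filter_insert2 n i (A : Finset ℕ) (by omega) (by omega)]
            push_cast
            omega
          rw [hsgn, sgn_sub_one]
          ring
        · rw [if_pos hT1, if_neg hC1]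
          by_cases ht : n ∉ (B : Finset ℕ) ∧ n - 1 ∉ (B : Finset ℕ)
          · by_cases hc2 : OmLs n i (A : Finset ℕ)
                (insert (n - 1) (insert n (B : Finset ℕ))) ∧ Odd (A : Finset ℕ).card
            · exfalso
              obtain ⟨_, hback⟩ := YnL_cancel hn ht.1 ht.2 hin hin1 (OmLs_comm.1 hc2.1)
              exact hC1 ⟨OmLs_comm.1 hback, (odd_of_eq_add_two hcard.symm).1 hc2.2⟩
            · rw [if_pos ht, if_neg hc2]; ring
          · rw [if_neg ht]; ring
      · rw [if_neg hT1, zero_mul, zero_add]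
        by_cases hT2 : n ∉ (B : Finset ℕ) ∧ n - 1 ∉ (B : Finset ℕ)
        · by_cases hc2 : OmLs n i (A : Finset ℕ)
              (insert (n - 1) (insert n (B : Finset ℕ))) ∧ Odd (A : Finset ℕ).card
          · exfalso
            obtain ⟨hfwd, _⟩ := YnL_cancel hn hT2.1 hT2.2 hin hin1 (OmLs_comm.1 hc2.1)
            exact hT1 hfwd
          · rw [if_pos hT2, if_neg hc2, mul_zero]
        · rw [if_neg hT2, zero_mul]

/-! ### Part E: action of the Chevalley generators on the distinguished tensors -/

lemma TE_Xlow (n k i : ℕ) (hk1 : 1 ≤ k) (hkn : k < n) (h : k + 1 ∈ Finset.Icc 1 n) :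
    (LinearMap.rTensor (Sp n) (Xop n k) + LinearMap.lTensor (Sp n) (Xop n k)) (eTlow n i)
      = if i = k + 1 then eTlow n k else 0 := by
  apply Phi_injective
  funext p
  have hL : ∀ (f : Sp n) (A : SIdx n), Xop n k f A
      = (if k ∈ (A : Finset ℕ) ∧ k + 1 ∉ (A : Finset ℕ) then (1 : ℂ) else 0)
        * f (mvX n k h A) := fun f A => Xop_apply n k hk1 hkn h f A
  rw [LinearMap.add_apply, map_add, Pi.add_apply,
    Phi_rTensor n (Xop n k) _ (mvX n k h) hL (eTlow n i) p,
    Phi_lTensor n (Xop n k) _ (mvX n k h) hL (eTlow n i) p, Phi_eTlow, Phi_eTlow]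
  beta_reduce
  rw [PD_Xlow n k i hk1 hkn h p]
  split_ifs with hik
  · rw [Phi_eTlow]
  · rw [map_zero]
    rfl

lemma TE_Xhigh (n k i : ℕ) (hk1 : 1 ≤ k) (hkn : k < n) (h : k + 1 ∈ Finset.Icc 1 n) :
    (LinearMap.rTensor (Sp n) (Xop n k) + LinearMap.lTensor (Sp n) (Xop n k)) (eThigh n i)
      = if i = k then -eThigh n (k + 1) else 0 := by
  apply Phi_injective
  funext p
  have hL : ∀ (f : Sp n) (A : SIdx n), Xop n k f A
      = (if k ∈ (A : Finset ℕ) ∧ k + 1 ∉ (A : Finset ℕ) then (1 : ℂ) else 0)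
        * f (mvX n k h A) := fun f A => Xop_apply n k hk1 hkn h f A
  rw [LinearMap.add_apply, map_add, Pi.add_apply,
    Phi_rTensor n (Xop n k) _ (mvX n k h) hL (eThigh n i) p,
    Phi_lTensor n (Xop n k) _ (mvX n k h) hL (eThigh n i) p, Phi_eThigh, Phi_eThigh]
  beta_reduce
  rw [PD_Xhigh n k i hk1 hkn h p]
  split_ifs with hik
  · rw [map_neg, Pi.neg_apply, Phi_eThigh]
  · rw [map_zero]
    rfl

lemma TE_Ylow (n k i : ℕ) (hk1 : 1 ≤ k) (hkn : k < n) (h : k ∈ Finset.Icc 1 n) :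
    (LinearMap.rTensor (Sp n) (Yop n k) + LinearMap.lTensor (Sp n) (Yop n k)) (eTlow n i)
      = if i = k then eTlow n (k + 1) else 0 := by
  apply Phi_injective
  funext p
  have hL : ∀ (f : Sp n) (A : SIdx n), Yop n k f A
      = (if k + 1 ∈ (A : Finset ℕ) ∧ k ∉ (A : Finset ℕ) then (1 : ℂ) else 0)
        * f (mvY n k h A) := fun f A => Yop_apply n k hk1 hkn h f A
  rw [LinearMap.add_apply, map_add, Pi.add_apply,
    Phi_rTensor n (Yop n k) _ (mvY n k h) hL (eTlow n i) p,
    Phi_lTensor n (Yop n k) _ (mvY n k h) hL (eTlow n i) p, Phi_eTlow, Phi_eTlow]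
  beta_reduce
  rw [PD_Ylow n k i hk1 hkn h p]
  split_ifs with hik
  · rw [Phi_eTlow]
  · rw [map_zero]
    rfl

lemma TE_Yhigh (n k i : ℕ) (hk1 : 1 ≤ k) (hkn : k < n) (h : k ∈ Finset.Icc 1 n) :
    (LinearMap.rTensor (Sp n) (Yop n k) + LinearMap.lTensor (Sp n) (Yop n k)) (eThigh n i)
      = if i = k + 1 then -eThigh n k else 0 := by
  apply Phi_injective
  funext p
  have hL : ∀ (f : Sp n) (A : SIdx n), Yop n k f A
      = (if k + 1 ∈ (A : Finset ℕ) ∧ k ∉ (A : Finset ℕ) then (1 : ℂ) else 0)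
        * f (mvY n k h A) := fun f A => Yop_apply n k hk1 hkn h f A
  rw [LinearMap.add_apply, map_add, Pi.add_apply,
    Phi_rTensor n (Yop n k) _ (mvY n k h) hL (eThigh n i) p,
    Phi_lTensor n (Yop n k) _ (mvY n k h) hL (eThigh n i) p, Phi_eThigh, Phi_eThigh]
  beta_reduce
  rw [PD_Yhigh n k i hk1 hkn h p]
  split_ifs with hik
  · rw [map_neg, Pi.neg_apply, Phi_eThigh]
  · rw [map_zero]
    rfl

lemma TE_XnLow (n i : ℕ) (hn : 3 ≤ n) (hi : i ≤ n) :
    (LinearMap.rTensor (Sp n) (Xop n n) + LinearMap.lTensor (Sp n) (Xop n n)) (eTlow n i)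
      = 0 := by
  apply Phi_injective
  funext p
  have hL : ∀ (f : Sp n) (A : SIdx n), Xop n n f A
      = (if n ∈ (A : Finset ℕ) ∧ n - 1 ∈ (A : Finset ℕ) then (-1 : ℂ) else 0)
        * f (mvXn n A) := fun f A => Xn_apply n hn f A
  rw [LinearMap.add_apply, map_add, Pi.add_apply,
    Phi_rTensor n (Xop n n) _ (mvXn n) hL (eTlow n i) p,
    Phi_lTensor n (Xop n n) _ (mvXn n) hL (eTlow n i) p, Phi_eTlow, Phi_eTlow]
  beta_reduce
  rw [PD_XnLow n i hn hi p, map_zero]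
  rfl

lemma TE_XnHigh (n i : ℕ) (hn : 3 ≤ n) (hoddn : Odd n) (hi : i ≤ n) :
    (LinearMap.rTensor (Sp n) (Xop n n) + LinearMap.lTensor (Sp n) (Xop n n)) (eThigh n i)
      = if i = n then eTlow n (n - 1) else if i = n - 1 then -eTlow n n else 0 := by
  apply Phi_injective
  funext p
  have hL : ∀ (f : Sp n) (A : SIdx n), Xop n n f A
      = (if n ∈ (A : Finset ℕ) ∧ n - 1 ∈ (A : Finset ℕ) then (-1 : ℂ) else 0)
        * f (mvXn n A) := fun f A => Xn_apply n hn f A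
  rw [LinearMap.add_apply, map_add, Pi.add_apply,
    Phi_rTensor n (Xop n n) _ (mvXn n) hL (eThigh n i) p,
    Phi_lTensor n (Xop n n) _ (mvXn n) hL (eThigh n i) p, Phi_eThigh, Phi_eThigh]
  beta_reduce
  rw [PD_XnHigh n i hn hoddn hi p]
  split_ifs with h1 h2
  · rw [Phi_eTlow]
  · rw [map_neg, Pi.neg_apply, Phi_eTlow]
  · rw [map_zero]
    rfl

lemma TE_YnLow (n i : ℕ) (hn : 3 ≤ n) (hoddn : Odd n) (hi : i ≤ n)
    (h1 : n - 1 ∈ Finset.Icc 1 n) (h2 : n ∈ Finset.Icc 1 n) :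
    (LinearMap.rTensor (Sp n) (Yop n n) + LinearMap.lTensor (Sp n) (Yop n n)) (eTlow n i)
      = if i = n then eThigh n (n - 1) else if i = n - 1 then -eThigh n n else 0 := by
  apply Phi_injective
  funext p
  have hL : ∀ (f : Sp n) (A : SIdx n), Yop n n f A
      = (if n ∉ (A : Finset ℕ) ∧ n - 1 ∉ (A : Finset ℕ) then (1 : ℂ) else 0)
        * f (mvYn n h1 h2 A) := fun f A => Yn_apply n hn h1 h2 f A
  rw [LinearMap.add_apply, map_add, Pi.add_apply,
    Phi_rTensor n (Yop n n) _ (mvYn n h1 h2) hL (eTlow n i) p,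
    Phi_lTensor n (Yop n n) _ (mvYn n h1 h2) hL (eTlow n i) p, Phi_eTlow, Phi_eTlow]
  beta_reduce
  rw [PD_YnLow n i hn hoddn hi h1 h2 p]
  split_ifs with ha hb
  · rw [Phi_eThigh]
  · rw [map_neg, Pi.neg_apply, Phi_eThigh]
  · rw [map_zero]
    rfl

lemma TE_YnHigh (n i : ℕ) (hn : 3 ≤ n) (hi : i ≤ n)
    (h1 : n - 1 ∈ Finset.Icc 1 n) (h2 : n ∈ Finset.Icc 1 n) :
    (LinearMap.rTensor (Sp n) (Yop n n) + LinearMap.lTensor (Sp n) (Yop n n)) (eThigh n i)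
      = 0 := by
  apply Phi_injective
  funext p
  have hL : ∀ (f : Sp n) (A : SIdx n), Yop n n f A
      = (if n ∉ (A : Finset ℕ) ∧ n - 1 ∉ (A : Finset ℕ) then (1 : ℂ) else 0)
        * f (mvYn n h1 h2 A) := fun f A => Yn_apply n hn h1 h2 f A
  rw [LinearMap.add_apply, map_add, Pi.add_apply,
    Phi_rTensor n (Yop n n) _ (mvYn n h1 h2) hL (eThigh n i) p,
    Phi_lTensor n (Yop n n) _ (mvYn n h1 h2) hL (eThigh n i) p, Phi_eThigh, Phi_eThigh]
  beta_reduce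
  rw [PD_YnHigh n i hn hi h1 h2 p, map_zero]
  rfl

/-! ### Part F: assembling the theorem -/

lemma coordL_apply (n l : ℕ) (f : Vsp n) :
    coordL n l f = ∑ x : Fin (2 * n), (if (x : ℕ) + 1 = l then 1 else 0) * f x := rfl

lemma coordL_single (n l : ℕ) (x : Fin (2 * n)) :
    coordL n l (Pi.single x 1) = if (x : ℕ) + 1 = l then 1 else 0 := by
  rw [coordL_apply, Finset.sum_eq_single x]
  · simp
  · intro y _ hy
    simp [Pi.single_apply, hy]
  · intro hx
    exact absurd (Finset.mem_univ x) hx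

lemma Tmap_single (n : ℕ) (hn : 3 ≤ n) (x : Fin (2 * n)) :
    Tmap n (Pi.single x 1)
      = if (x : ℕ) + 1 ≤ n then eTlow n ((x : ℕ) + 1) else eThigh n ((x : ℕ) + 1 - n) := by
  rw [Tmap, LinearMap.sum_apply]
  simp only [LinearMap.add_apply, LinearMap.smulRight_apply, coordL_single]
  rw [Finset.sum_congr rfl (fun i _ => by
    rw [ite_smul, one_smul, zero_smul, ite_smul, one_smul, zero_smul])]
  rw [Finset.sum_add_distrib]
  by_cases hx : (x : ℕ) + 1 ≤ n
  · rw [if_pos hx]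
    have hzero : ∀ i ∈ Finset.Icc 1 n,
        (if (x : ℕ) + 1 = n + i then eThigh n i else 0) = 0 := by
      intro i hi
      rw [if_neg]
      simp only [Finset.mem_Icc] at hi
      omega
    rw [Finset.sum_congr rfl hzero, Finset.sum_const_zero, add_zero,
      Finset.sum_ite_eq, if_pos (by simp only [Finset.mem_Icc]; omega)]
  · rw [if_neg hx]
    have hzero : ∀ i ∈ Finset.Icc 1 n,
        (if (x : ℕ) + 1 = i then eTlow n i else 0) = 0 := by
      intro i hi
      rw [if_neg]
      simp only [Finset.mem_Icc] at hi
      omega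
    rw [Finset.sum_congr rfl hzero, Finset.sum_const_zero, zero_add]
    have hcong : ∀ i ∈ Finset.Icc 1 n,
        (if (x : ℕ) + 1 = n + i then eThigh n i else 0)
          = (if (x : ℕ) + 1 - n = i then eThigh n i else 0) := by
      intro i hi
      simp only [Finset.mem_Icc] at hi
      by_cases hc : (x : ℕ) + 1 = n + i
      · rw [if_pos hc, if_pos (by omega)]
      · rw [if_neg hc, if_neg (by omega)]
    have hlt := x.isLt
    rw [Finset.sum_congr rfl hcong, Finset.sum_ite_eq,
      if_pos (by simp only [Finset.mem_Icc]; omega)]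

lemma uB_single (n j : ℕ) (hj1 : 1 ≤ j) (hj2 : j ≤ 2 * n) :
    uB n j = Pi.single (⟨j - 1, by omega⟩ : Fin (2 * n)) (1 : ℂ) := by
  funext y
  show (if (y : ℕ) + 1 = j then (1 : ℂ) else 0) = _
  rw [Pi.single_apply]
  by_cases hc : (y : ℕ) + 1 = j
  · rw [if_pos hc, if_pos (Fin.ext (by simp; omega))]
  · rw [if_neg hc, if_neg (fun hy => hc (by rw [hy]; simp; omega))]

lemma Tmap_uB_low (n j : ℕ) (hn : 3 ≤ n) (hj1 : 1 ≤ j) (hj2 : j ≤ n) :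
    Tmap n (uB n j) = eTlow n j := by
  rw [uB_single n j hj1 (by omega), Tmap_single n hn]
  have hv : ((⟨j - 1, by omega⟩ : Fin (2 * n)) : ℕ) + 1 = j := by simp; omega
  rw [hv, if_pos hj2]

lemma Tmap_uB_high (n j : ℕ) (hn : 3 ≤ n) (hj1 : 1 ≤ j) (hj2 : j ≤ n) :
    Tmap n (uB n (n + j)) = eThigh n j := by
  rw [uB_single n (n + j) (by omega) (by omega), Tmap_single n hn]
  have hv : ((⟨n + j - 1, by omega⟩ : Fin (2 * n)) : ℕ) + 1 = n + j := by simp; omega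
  rw [hv, if_neg (by omega)]
  congr 1
  omega

lemma matUnit_apply (n a b : ℕ) (f : Vsp n) :
    matUnit n a b f = (coordL n b f) • uB n a := rfl

theorem stmt10' (n : ℕ) (hn : 3 ≤ n) (hodd : Odd n) (k : ℕ) (hk : k ∈ Finset.Icc 1 n) :
    (Tmap n).comp (XV n k)
        = (LinearMap.rTensor (Sp n) (Xop n k) + LinearMap.lTensor (Sp n) (Xop n k)).comp
            (Tmap n) ∧
    (Tmap n).comp (YV n k)
        = (LinearMap.rTensor (Sp n) (Yop n k) + LinearMap.lTensor (Sp n) (Yop n k)).comp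
            (Tmap n) := by
  simp only [Finset.mem_Icc] at hk
  obtain ⟨hk1, hk2⟩ := hk
  have hnIcc : n ∈ Finset.Icc 1 n := by simp only [Finset.mem_Icc]; omega
  have hn1Icc : n - 1 ∈ Finset.Icc 1 n := by simp only [Finset.mem_Icc]; omega
  constructor
  · apply Module.Basis.ext (Pi.basisFun ℂ (Fin (2 * n)))
    intro x
    have hbx : (Pi.basisFun ℂ (Fin (2 * n))) x = Pi.single x 1 := by
      simp [Pi.basisFun_apply]
    have hlt := x.isLt
    rw [hbx, LinearMap.comp_apply, LinearMap.comp_apply, Tmap_single n hn x]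
    by_cases hkn : k = n
    · subst hkn
      rw [XV, if_pos rfl, LinearMap.sub_apply, map_sub, matUnit_apply, matUnit_apply,
        coordL_single, coordL_single, map_smul, map_smul,
        Tmap_uB_low k (k - 1) hn (by omega) (by omega), Tmap_uB_low k k hn (by omega) le_rfl]
      by_cases hx : (x : ℕ) + 1 ≤ k
      · rw [if_pos hx, TE_XnLow k ((x : ℕ) + 1) hn hx, if_neg (by omega), if_neg (by omega),
          zero_smul, zero_smul, sub_zero]
      · rw [if_neg hx, TE_XnHigh k ((x : ℕ) + 1 - k) hn hodd (by omega)]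
        by_cases hc1 : (x : ℕ) + 1 = 2 * k
        · rw [if_pos hc1, if_neg (by omega), if_pos (by omega), one_smul, zero_smul,
            sub_zero]
        · by_cases hc2 : (x : ℕ) + 1 = 2 * k - 1
          · rw [if_neg hc1, if_pos hc2, if_neg (by omega), if_pos (by omega), one_smul,
              zero_smul, zero_sub]
          · rw [if_neg hc1, if_neg hc2, if_neg (by omega), if_neg (by omega), zero_smul,
              zero_smul, sub_zero]
    · have hklt : k < n := by omega
      have hmem1 : k + 1 ∈ Finset.Icc 1 n := by simp only [Finset.mem_Icc]; omega
      rw [XV, if_neg hkn, LinearMap.sub_apply, map_sub, matUnit_apply, matUnit_apply,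
        coordL_single, coordL_single, map_smul, map_smul,
        Tmap_uB_low n k hn hk1 (by omega),
        show n + k + 1 = n + (k + 1) by omega,
        Tmap_uB_high n (k + 1) hn (by omega) (by omega)]
      by_cases hx : (x : ℕ) + 1 ≤ n
      · rw [if_pos hx, TE_Xlow n k ((x : ℕ) + 1) hk1 hklt hmem1,
          if_neg (show ¬ (x : ℕ) + 1 = n + k by omega), zero_smul, sub_zero, ite_smul,
          one_smul, zero_smul]
      · rw [if_neg hx, TE_Xhigh n k ((x : ℕ) + 1 - n) hk1 hklt hmem1,
          if_neg (show ¬ (x : ℕ) + 1 = k + 1 by omega), zero_smul, zero_sub]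
        by_cases hc : (x : ℕ) + 1 = n + k
        · rw [if_pos hc, if_pos (by omega), one_smul]
        · rw [if_neg hc, if_neg (by omega), zero_smul, neg_zero]
  · apply Module.Basis.ext (Pi.basisFun ℂ (Fin (2 * n)))
    intro x
    have hbx : (Pi.basisFun ℂ (Fin (2 * n))) x = Pi.single x 1 := by
      simp [Pi.basisFun_apply]
    have hlt := x.isLt
    rw [hbx, LinearMap.comp_apply, LinearMap.comp_apply, Tmap_single n hn x]
    by_cases hkn : k = n
    · subst hkn
      have h2k : Tmap k (uB k (2 * k)) = eThigh k k := by
        have h' := Tmap_uB_high k k hn (by omega) le_rfl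
        rw [show k + k = 2 * k by omega] at h'
        exact h'
      have h2k1 : Tmap k (uB k (2 * k - 1)) = eThigh k (k - 1) := by
        have h' := Tmap_uB_high k (k - 1) hn (by omega) (by omega)
        rw [show k + (k - 1) = 2 * k - 1 by omega] at h'
        exact h'
      rw [YV, if_pos rfl, LinearMap.sub_apply, map_sub, matUnit_apply, matUnit_apply,
        coordL_single, coordL_single, map_smul, map_smul, h2k1, h2k]
      by_cases hx : (x : ℕ) + 1 ≤ k
      · rw [if_pos hx, TE_YnLow k ((x : ℕ) + 1) hn hodd hx hn1Icc hnIcc]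
        by_cases hc1 : (x : ℕ) + 1 = k
        · rw [if_pos hc1, if_neg (by omega), if_pos hc1, one_smul, zero_smul, sub_zero]
        · by_cases hc2 : (x : ℕ) + 1 = k - 1
          · rw [if_neg hc1, if_pos hc2, if_neg hc1, if_pos hc2, one_smul, zero_smul,
              zero_sub]
          · rw [if_neg hc1, if_neg hc2, if_neg hc1, if_neg hc2, zero_smul, zero_smul,
              sub_zero]
      · rw [if_neg hx, TE_YnHigh k ((x : ℕ) + 1 - k) hn (by omega) hn1Icc hnIcc,
          if_neg (by omega), if_neg (by omega), zero_smul, zero_smul, sub_zero]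
    · have hklt : k < n := by omega
      have hmemk : k ∈ Finset.Icc 1 n := by simp only [Finset.mem_Icc]; omega
      rw [YV, if_neg hkn, LinearMap.sub_apply, map_sub, matUnit_apply, matUnit_apply,
        coordL_single, coordL_single, map_smul, map_smul,
        Tmap_uB_low n (k + 1) hn (by omega) (by omega),
        Tmap_uB_high n k hn hk1 (by omega)]
      by_cases hx : (x : ℕ) + 1 ≤ n
      · rw [if_pos hx, TE_Ylow n k ((x : ℕ) + 1) hk1 hklt hmemk,
          if_neg (show ¬ (x : ℕ) + 1 = n + k + 1 by omega), zero_smul, sub_zero, ite_smul,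
          one_smul, zero_smul]
      · rw [if_neg hx, TE_Yhigh n k ((x : ℕ) + 1 - n) hk1 hklt hmemk,
          if_neg (show ¬ (x : ℕ) + 1 = k by omega), zero_smul, zero_sub]
        by_cases hc : (x : ℕ) + 1 = n + k + 1
        · rw [if_pos hc, if_pos (by omega), one_smul]
        · rw [if_neg hc, if_neg (by omega), zero_smul, neg_zero]

/-- The map `T : V → S ⊗ S` with `T(u_i) = ẽ_i`, `T(u_{n+i}) = ẽ_{n+i}` intertwines the
Chevalley generators: `T ∘ X_k^V = (X_k ⊗ id + id ⊗ X_k) ∘ T` and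
`T ∘ Y_k^V = (Y_k ⊗ id + id ⊗ Y_k) ∘ T` for every `k ∈ {1,…,n}`. -/
theorem stmt10 (n : ℕ) (hn : 3 ≤ n) (hodd : Odd n) (k : ℕ) (hk : k ∈ Finset.Icc 1 n) :
    (Tmap n).comp (XV n k)
        = (LinearMap.rTensor (Sp n) (Xop n k) + LinearMap.lTensor (Sp n) (Xop n k)).comp
            (Tmap n) ∧
    (Tmap n).comp (YV n k)
        = (LinearMap.rTensor (Sp n) (Yop n k) + LinearMap.lTensor (Sp n) (Yop n k)).comp
            (Tmap n) := by
  exact stmt10' n hn hodd k hk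

end
end

section
/- Let n ≥ 3 be an odd integer. The vector Σ_{i=1}^n e_{{i}} ⊗ u_{n+i} ∈ S ⊗ V satisfies (Y_k ⊗ id_V + id_S ⊗ Y_k^V)(Σ_{i=1}^n e_{{i}} ⊗ u_{n+i}) = 0 for every k ∈ {1,…,n}; that is, it is a lowest weight vector (of weight −(L_1+⋯+L_n)/2) spanning the copy of the half-spin representation U₋ inside U₊ ⊗ V. -/
open scoped TensorProduct Classical

noncomputable section

/-- The lowest weight vector `Σ_{i=1}^n e_{{i}} ⊗ u_{n+i} ∈ S ⊗ V`. -/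
def lwSV (n : ℕ) : Sp n ⊗[ℂ] Vsp n :=
  ∑ i ∈ (Finset.Icc 1 n).attach,
    eB n ⟨{(i : ℕ)}, Finset.mem_powerset.2 (Finset.singleton_subset_iff.2 i.2)⟩
      ⊗ₜ[ℂ] uB n (n + (i : ℕ))



lemma eB_apply (n : ℕ) (X Y : SIdx n) : eB n X Y = if Y = X then 1 else 0 := by
  simp [eB, Pi.single_apply]

lemma coe_insertIdx (n : ℕ) (X : SIdx n) (i : ℕ) (h : i ∈ Finset.Icc 1 n) :
    ((insertIdx n X i h : SIdx n) : Finset ℕ) = insert i (X : Finset ℕ) := rfl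

lemma coe_eraseIdx (n : ℕ) (X : SIdx n) (i : ℕ) :
    ((eraseIdx n X i : SIdx n) : Finset ℕ) = (X : Finset ℕ).erase i := rfl

lemma Yop_lt_eB (n k i : ℕ) (hk1 : 1 ≤ k) (hkn : k < n) (hi : i ∈ Finset.Icc 1 n)
    (pf : ({i} : Finset ℕ) ∈ (Finset.Icc 1 n).powerset)
    (pf' : ({k+1} : Finset ℕ) ∈ (Finset.Icc 1 n).powerset) :
    Yop n k (eB n ⟨{i}, pf⟩) = if i = k then eB n ⟨{k+1}, pf'⟩ else 0 := by
  have hne : k ≠ n := Nat.ne_of_lt hkn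
  have hkIcc : k ∈ Finset.Icc 1 n := Finset.mem_Icc.2 ⟨hk1, hkn.le⟩
  have hkk1 : k ≠ k + 1 := by omega
  funext Y
  simp only [Yop, if_neg hne, LinearMap.neg_apply, LinearMap.comp_apply, aop, adag,
    LinearMap.coe_mk, AddHom.coe_mk, eB_apply, Pi.neg_apply]
  by_cases hkY : k ∈ (Y : Finset ℕ)
  · rw [dif_neg (by tauto)]
    by_cases hik : i = k
    · subst hik
      rw [if_pos rfl, eB_apply, if_neg, neg_zero]
      intro h
      rw [h] at hkY
      simp only [Finset.mem_singleton] at hkY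
      omega
    · simp [hik]
  · rw [dif_pos ⟨hkIcc, hkY⟩]
    simp only [coe_insertIdx, coe_eraseIdx]
    have key : (insert k (Y : Finset ℕ)).erase (k+1) = {i} →
        i = k ∧ (Y : Finset ℕ) ⊆ {k+1} := by
      intro h
      have hik : i = k := by
        have hmem : k ∈ (insert k (Y : Finset ℕ)).erase (k+1) :=
          Finset.mem_erase.2 ⟨hkk1, Finset.mem_insert_self _ _⟩
        rw [h, Finset.mem_singleton] at hmem
        omega
      refine ⟨hik, fun y hy => ?_⟩
      rcases eq_or_ne y (k+1) with h1 | h1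
      · simp [h1]
      · have hmem : y ∈ (insert k (Y : Finset ℕ)).erase (k+1) :=
          Finset.mem_erase.2 ⟨h1, Finset.mem_insert_of_mem hy⟩
        rw [h, Finset.mem_singleton] at hmem
        rw [hmem, hik] at hy
        exact absurd hy hkY
    by_cases hY : (Y : Finset ℕ) = {k+1}
    · have h1 : k + 1 ∈ insert k (Y : Finset ℕ) := by rw [hY]; simp
      erw [if_pos h1]
      have h2 : (insert k (Y : Finset ℕ)).erase (k+1) = {k} := by
        rw [hY]; ext x; simp; omega
      have h3 : Finset.filter (fun m => m < k) (insert k (Y : Finset ℕ)) = ∅ := by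
        rw [hY]; ext x; simp; omega
      rw [h2, h3]
      have h4 : Finset.filter (fun m => m < k + 1) ({k} : Finset ℕ) = {k} := by
        ext x; simp; omega
      rw [h4]
      have hco : ((eraseIdx n (insertIdx n Y k hkIcc) (k+1) : SIdx n) : Finset ℕ)
          = {k} := by
        rw [coe_eraseIdx, coe_insertIdx]; exact h2
      by_cases hik : i = k
      · subst hik
        rw [if_pos (Subtype.ext hco), if_pos rfl, eB_apply, if_pos (Subtype.ext hY)]
        simp
      · rw [if_neg, if_neg hik, Pi.zero_apply]
        · simp
        · intro h
          have h5 := congrArg (fun z : SIdx n => (z : Finset ℕ)) h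
          simp only at h5
          rw [hco] at h5
          exact hik (Finset.singleton_injective h5).symm
    · have hRHS : (if i = k then eB n ⟨{k+1}, pf'⟩ else 0) Y = 0 := by
        by_cases hik : i = k
        · rw [if_pos hik, eB_apply, if_neg]
          intro h; exact hY (congrArg (fun z : SIdx n => (z : Finset ℕ)) h)
        · simp [hik]
      rw [hRHS]
      by_cases h1 : k + 1 ∈ insert k (Y : Finset ℕ)
      · erw [if_pos h1]
        rw [if_neg, mul_zero, mul_zero, neg_zero]
        intro h
        have h2 : (insert k (Y : Finset ℕ)).erase (k+1) = {i} :=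
          congrArg (fun z : SIdx n => (z : Finset ℕ)) h
        obtain ⟨-, hsub⟩ := key h2
        have hk1Y : k + 1 ∈ (Y : Finset ℕ) := by
          rcases Finset.mem_insert.1 h1 with h | h
          · omega
          · exact h
        exact hY (Finset.Subset.antisymm hsub (Finset.singleton_subset_iff.2 hk1Y))
      · erw [if_neg h1]
        rw [mul_zero, neg_zero]



lemma Yop_n_eB (n i : ℕ) (hn : 3 ≤ n)
    (pf : ({i} : Finset ℕ) ∈ (Finset.Icc 1 n).powerset) :
    Yop n n (eB n ⟨{i}, pf⟩) = 0 := by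
  funext Y
  simp only [Yop, eq_self_iff_true, if_true, LinearMap.comp_apply, aop, LinearMap.coe_mk,
    AddHom.coe_mk, eB_apply, Pi.zero_apply]
  by_cases h1 : n ∈ Finset.Icc 1 n ∧ n ∉ (Y : Finset ℕ)
  · rw [dif_pos h1]
    by_cases h2 : (n-1) ∈ Finset.Icc 1 n ∧
        (n-1) ∉ ((insertIdx n Y n h1.1 : SIdx n) : Finset ℕ)
    · rw [dif_pos h2, if_neg, mul_zero, mul_zero]
      intro h
      have h5 := congrArg (fun z : SIdx n => (z : Finset ℕ)) h
      simp only [coe_insertIdx] at h5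
      have hA : n - 1 ∈ ({i} : Finset ℕ) := h5 ▸ Finset.mem_insert_self _ _
      have hB : n ∈ ({i} : Finset ℕ) :=
        h5 ▸ (Finset.mem_insert_of_mem (Finset.mem_insert_self _ _))
      simp only [Finset.mem_singleton] at hA hB
      omega
    · rw [dif_neg h2, mul_zero]
  · rw [dif_neg h1]

lemma coordL_uB (n l j : ℕ) (hj1 : 1 ≤ j) (hj2 : j ≤ 2*n) :
    coordL n l (uB n j) = if l = j then 1 else 0 := by
  simp only [coordL, uB, LinearMap.coe_mk, AddHom.coe_mk]
  by_cases h : l = j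
  · subst h
    rw [Finset.sum_eq_single (⟨l-1, by omega⟩ : Fin (2*n))]
    · simp only [Fin.val_mk]
      rw [if_pos (by omega : l - 1 + 1 = l)]
      simp
    · intro x _ hx
      have hne : (x : ℕ) + 1 ≠ l := by
        intro hc
        apply hx
        apply Fin.ext
        simp
        omega
      simp [hne]
    · simp
  · rw [if_neg h]
    apply Finset.sum_eq_zero
    intro x _
    by_cases h1 : (x:ℕ)+1 = l <;> by_cases h2 : (x:ℕ)+1 = j <;> simp [h1, h2] <;> omega

lemma YV_lt_uB (n k i : ℕ) (hk1 : 1 ≤ k) (hkn : k < n) (hi1 : 1 ≤ i) (hin : i ≤ n) :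
    YV n k (uB n (n + i)) = if i = k + 1 then -uB n (n + k) else 0 := by
  have hne : k ≠ n := by omega
  simp only [YV, if_neg hne, LinearMap.sub_apply, matUnit, LinearMap.smulRight_apply]
  rw [coordL_uB n k (n+i) (by omega) (by omega),
    coordL_uB n (n+k+1) (n+i) (by omega) (by omega)]
  rw [if_neg (by omega : ¬ k = n + i)]
  by_cases h : i = k + 1
  · rw [if_pos (by omega : n + k + 1 = n + i), if_pos h]
    simp
  · rw [if_neg (by omega : ¬ n + k + 1 = n + i), if_neg h]
    simp

lemma YV_n_uB (n i : ℕ) (hn : 3 ≤ n) (hi1 : 1 ≤ i) (hin : i ≤ n) :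
    YV n n (uB n (n + i)) = 0 := by
  simp only [YV, eq_self_iff_true, if_true, LinearMap.sub_apply, matUnit,
    LinearMap.smulRight_apply]
  rw [coordL_uB n n (n+i) (by omega) (by omega),
    coordL_uB n (n-1) (n+i) (by omega) (by omega)]
  rw [if_neg (by omega : ¬ n = n + i), if_neg (by omega : ¬ n - 1 = n + i)]
  simp


/-- `Σ_{i=1}^n e_{{i}} ⊗ u_{n+i}` is annihilated by `Y_k ⊗ id_V + id_S ⊗ Y_k^V` for every
`k ∈ {1,…,n}`: it is a lowest weight vector spanning the copy of `U₋` inside `U₊ ⊗ V`. -/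
theorem stmt11 (n : ℕ) (hn : 3 ≤ n) (hodd : Odd n) (k : ℕ) (hk : k ∈ Finset.Icc 1 n) :
    (LinearMap.rTensor (Vsp n) (Yop n k) + LinearMap.lTensor (Sp n) (YV n k)) (lwSV n)
      = 0 := by
  obtain ⟨hk1, hkn⟩ := Finset.mem_Icc.1 hk
  rw [lwSV]
  simp only [LinearMap.add_apply, map_sum, LinearMap.rTensor_tmul, LinearMap.lTensor_tmul]
  by_cases hkeq : k = n
  · subst hkeq
    apply Finset.sum_eq_zero
    intro i _
    rw [Yop_n_eB k (i:ℕ) hn _, YV_n_uB k (i:ℕ) hn (Finset.mem_Icc.1 i.2).1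
      (Finset.mem_Icc.1 i.2).2]
    simp [TensorProduct.zero_tmul, TensorProduct.tmul_zero]
  · have hklt : k < n := lt_of_le_of_ne hkn hkeq
    have pf' : ({k+1} : Finset ℕ) ∈ (Finset.Icc 1 n).powerset := by
      rw [Finset.mem_powerset, Finset.singleton_subset_iff, Finset.mem_Icc]
      omega
    set T : Sp n ⊗[ℂ] Vsp n := eB n ⟨{k+1}, pf'⟩ ⊗ₜ[ℂ] uB n (n+k) with hT
    have hterm : ∀ i ∈ (Finset.Icc 1 n).attach,
        (Yop n k (eB n ⟨{(i:ℕ)},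
            Finset.mem_powerset.2 (Finset.singleton_subset_iff.2 i.2)⟩)
          ⊗ₜ[ℂ] uB n (n + (i:ℕ))
        + eB n ⟨{(i:ℕ)}, Finset.mem_powerset.2 (Finset.singleton_subset_iff.2 i.2)⟩
          ⊗ₜ[ℂ] YV n k (uB n (n + (i:ℕ))))
        = (if (i:ℕ) = k then T else 0) + (if (i:ℕ) = k+1 then -T else 0) := by
      intro i _
      obtain ⟨hi1, hi2⟩ := Finset.mem_Icc.1 i.2
      rw [Yop_lt_eB n k (i:ℕ) hk1 hklt i.2 _ pf', YV_lt_uB n k (i:ℕ) hk1 hklt hi1 hi2]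
      congr 1
      · by_cases h : (i:ℕ) = k
        · rw [if_pos h, if_pos h, h]
        · rw [if_neg h, if_neg h, TensorProduct.zero_tmul]
      · by_cases h : (i:ℕ) = k+1
        · rw [if_pos h, if_pos h, TensorProduct.tmul_neg]
          have heq : (⟨{(i:ℕ)},
              Finset.mem_powerset.2 (Finset.singleton_subset_iff.2 i.2)⟩ : SIdx n)
              = ⟨{k+1}, pf'⟩ :=
            Subtype.ext (by show ({(i:ℕ)} : Finset ℕ) = ({k+1} : Finset ℕ); rw [h])
          rw [heq]
        · rw [if_neg h, if_neg h, TensorProduct.tmul_zero]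
    rw [Finset.sum_congr rfl hterm, Finset.sum_add_distrib]
    have hs1 : (∑ i ∈ (Finset.Icc 1 n).attach, if (i:ℕ) = k then T else 0) = T := by
      rw [Finset.sum_eq_single_of_mem (⟨k, hk⟩ : {x // x ∈ Finset.Icc 1 n})
        (Finset.mem_attach _ _)]
      · rw [if_pos rfl]
      · intro b _ hb
        rw [if_neg]
        intro hc
        exact hb (Subtype.ext hc)
    have hk' : k + 1 ∈ Finset.Icc 1 n := Finset.mem_Icc.2 ⟨by omega, by omega⟩
    have hs2 : (∑ i ∈ (Finset.Icc 1 n).attach, if (i:ℕ) = k+1 then -T else 0) = -T := by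
      rw [Finset.sum_eq_single_of_mem (⟨k+1, hk'⟩ : {x // x ∈ Finset.Icc 1 n})
        (Finset.mem_attach _ _)]
      · rw [if_pos rfl]
      · intro b _ hb
        rw [if_neg]
        intro hc
        exact hb (Subtype.ext hc)
    rw [hs1, hs2, add_neg_cancel]


end
end
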